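/- arXiv:2312.13673 — 6 statements merged into one kernel-verified Lean document; each statement's English description precedes it below -/
import Mathlib

section
/- Let K ⊆ ℂ be a connected compact set whose diameter is at most 1. Then for every n ≥ 1 and every monic polynomial p of degree n all of whose zeros lie in K, the unit lemniscate Λ_p = {z ∈ ℂ : |p(z)| < 1} is nonempty and connected. -/
open MeasureTheory Filter Polynomial Metric Set
open scoped Classical ENNReal NNReal Topology

noncomputable section

/-- The logarithmic potential `U_μ(z) = ∫ log|z-w| dμ(w)`, valued in `[-∞, ∞)` (as an `EReal`),
defined as the difference of the positive and negative parts. -/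
def logPotential (μ : Measure ℂ) (z : ℂ) : EReal :=
  ((∫⁻ w, ENNReal.ofReal (Real.log (‖z - w‖)) ∂μ : ℝ≥0∞) : EReal)
    - ((∫⁻ w, ENNReal.ofReal (-Real.log (‖z - w‖)) ∂μ : ℝ≥0∞) : EReal)

/-- The logarithmic energy `I(μ) = ∫∫ log|z-w| dμ(z) dμ(w)`, valued in `EReal`. -/
def energy (μ : Measure ℂ) : EReal :=
  ((∫⁻ q : ℂ × ℂ, ENNReal.ofReal (Real.log (‖q.1 - q.2‖)) ∂(μ.prod μ) : ℝ≥0∞) : EReal)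
    - ((∫⁻ q : ℂ × ℂ, ENNReal.ofReal (-Real.log (‖q.1 - q.2‖)) ∂(μ.prod μ) : ℝ≥0∞) : EReal)

/-- Borel probability measures supported on `K`. -/
def probOn (K : Set ℂ) : Set (Measure ℂ) :=
  {μ | IsProbabilityMeasure μ ∧ μ Kᶜ = 0}

/-- `log c(K) = sup {I(μ) : μ ∈ P(K)}`. -/
def logCapacity (K : Set ℂ) : EReal :=
  ⨆ μ ∈ probOn K, energy μ

/-- The logarithmic capacity `c(K)`, with `c(K) = 0` when the sup of energies is `-∞`. -/
def capacity (K : Set ℂ) : ℝ≥0∞ :=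
  (logCapacity K).exp

/-- The filled unit lemniscate `Λ_p = {z : |p(z)| < 1}`. -/
def lemniscate (p : Polynomial ℂ) : Set ℂ := {z | ‖p.eval z‖ < 1}

/-- The number of connected components of a planar set. -/
def numComponents (S : Set ℂ) : ℕ := Nat.card (ConnectedComponents S)

/-- `𝒫_n(K)`: monic polynomials of degree `n` with all zeros in `K`. -/
def monicProdOn (K : Set ℂ) (n : ℕ) : Set (Polynomial ℂ) :=
  {p | ∃ z : Fin n → ℂ, (∀ j, z j ∈ K) ∧ p = ∏ j, (X - C (z j))}

/-- `𝒞_n(K) = sup {𝒞(Λ_p) : p ∈ 𝒫_n(K)}`. -/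
def maxComponents (K : Set ℂ) (n : ℕ) : ℕ :=
  sSup ((fun p => numComponents (lemniscate p)) '' monicProdOn K n)

/-- `M(K) = limsup 𝒞_n(K)/n`. -/
def MK (K : Set ℂ) : ℝ := limsup (fun n : ℕ => (maxComponents K n : ℝ) / n) atTop

/-- `m(K) = liminf 𝒞_n(K)/n`. -/
def mK (K : Set ℂ) : ℝ := liminf (fun n : ℕ => (maxComponents K n : ℝ) / n) atTop

/-- A bounded Jordan domain: a bounded open connected set whose boundary is the image of an
injective continuous map from the unit circle. -/
def IsJordanDomain (Ω : Set ℂ) : Prop :=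
  IsOpen Ω ∧ IsConnected Ω ∧ Bornology.IsBounded Ω ∧
    ∃ γ : (Metric.sphere (0 : ℂ) 1) → ℂ, Continuous γ ∧ Function.Injective γ ∧
      frontier Ω = Set.range γ

/-- A `C²` Jordan arc: the image of an injective `C²` map on `[0,1]` with nowhere-vanishing
derivative. -/
def IsC2JordanArc (A : Set ℂ) : Prop :=
  ∃ γ : ℝ → ℂ, ContDiff ℝ 2 γ ∧ Set.InjOn γ (Set.Icc 0 1) ∧
    (∀ t ∈ Set.Icc (0 : ℝ) 1, deriv γ t ≠ 0) ∧ A = γ '' Set.Icc 0 1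

/-- A bounded Jordan domain with `C²` boundary: bounded, open, connected, whose boundary is
parametrized by a `C²`, `2π`-periodic map, injective on `[0, 2π)`, with nowhere-vanishing
derivative. -/
def IsC2JordanDomain (Ω : Set ℂ) : Prop :=
  IsOpen Ω ∧ IsConnected Ω ∧ Bornology.IsBounded Ω ∧
    ∃ γ : ℝ → ℂ, ContDiff ℝ 2 γ ∧ Function.Periodic γ (2 * Real.pi) ∧
      Set.InjOn γ (Set.Ico 0 (2 * Real.pi)) ∧ (∀ t, deriv γ t ≠ 0) ∧
      frontier Ω = Set.range γ


/-- If `K` is connected and compact with diameter at most `1`, then for every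
`n ≥ 1` and every monic polynomial of degree `n` with all zeros in `K`, the unit lemniscate is
nonempty and connected. -/
theorem statement3 (K : Set ℂ) (hK : IsCompact K) (hconn : IsConnected K)
    (hdiam : Metric.diam K ≤ 1) (n : ℕ) (hn : 1 ≤ n)
    (p : Polynomial ℂ) (hp : p ∈ monicProdOn K n) :
    (lemniscate p).Nonempty ∧ IsConnected (lemniscate p) := by
  obtain ⟨z, hzK, hpz⟩ := hp
  have hn' : 0 < n := hn
  set i0 : Fin n := ⟨0, hn'⟩ with hi0
  have habs : ∀ w : ℂ, ‖p.eval w‖ = ∏ j, ‖w - z j‖ := by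
    intro w
    rw [hpz, eval_prod, norm_prod]
    simp
  have hroot : ∀ j, z j ∈ lemniscate p := by
    intro j
    show ‖p.eval (z j)‖ < 1
    rw [habs, Finset.prod_eq_zero (Finset.mem_univ j) (by simp)]
    norm_num
  have hΛopen : IsOpen (lemniscate p) := by
    have : lemniscate p = (fun w => ‖p.eval w‖) ⁻¹' (Set.Iio 1) := rfl
    rw [this]
    exact (continuous_norm.comp p.continuous_aeval).isOpen_preimage _ isOpen_Iio
  have hd1 : ∀ j k, ‖z j - z k‖ ≤ 1 := by
    intro j k
    have h := Metric.dist_le_diam_of_mem hK.isBounded (hzK j) (hzK k)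
    rw [Complex.dist_eq] at h
    exact h.trans hdiam
  have hseg : ∀ w : ℂ, (∀ j, ‖w - z j‖ ≤ 1) → ∀ t : ℝ, 0 < t → t ≤ 1 →
      (1 - t) • w + t • z i0 ∈ lemniscate p := by
    intro w hw t ht0 ht1
    have h1t : (0:ℝ) ≤ 1 - t := by linarith
    set c : ℂ := (1 - t) • w + t • z i0 with hc
    have hcz : ∀ j, c - z j = ((1-t : ℝ):ℂ) * (w - z j) + ((t:ℝ):ℂ) * (z i0 - z j) := by
      intro j
      rw [hc]
      simp only [Complex.real_smul]
      push_cast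
      ring
    have hle : ∀ j, ‖c - z j‖ ≤ 1 := by
      intro j
      rw [hcz j]
      calc ‖((1-t : ℝ):ℂ) * (w - z j) + ((t:ℝ):ℂ) * (z i0 - z j)‖
          ≤ ‖((1-t:ℝ):ℂ) * (w - z j)‖ + ‖((t:ℝ):ℂ) * (z i0 - z j)‖ :=
            norm_add_le _ _
        _ = (1-t) * ‖w - z j‖ + t * ‖z i0 - z j‖ := by
            rw [norm_mul, norm_mul, Complex.norm_real, Complex.norm_real, Real.norm_eq_abs, Real.norm_eq_abs,
              abs_of_nonneg h1t, abs_of_nonneg ht0.le]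
        _ ≤ (1-t) * 1 + t * 1 :=
            add_le_add (mul_le_mul_of_nonneg_left (hw j) h1t)
              (mul_le_mul_of_nonneg_left (hd1 i0 j) ht0.le)
        _ = 1 := by ring
    have hlt : ‖c - z i0‖ ≤ 1 - t := by
      have hcc : c - z i0 = ((1-t:ℝ):ℂ) * (w - z i0) := by
        rw [hcz i0]; ring
      rw [hcc, norm_mul, Complex.norm_real, Real.norm_eq_abs, abs_of_nonneg h1t]
      calc (1-t) * ‖w - z i0‖ ≤ (1-t) * 1 :=
            mul_le_mul_of_nonneg_left (hw i0) h1t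
        _ = 1 - t := mul_one _
    show ‖p.eval c‖ < 1
    rw [habs]
    calc ∏ j, ‖c - z j‖
        = ‖c - z i0‖ * ∏ j ∈ Finset.univ.erase i0, ‖c - z j‖ :=
          (Finset.mul_prod_erase _ _ (Finset.mem_univ i0)).symm
      _ ≤ (1 - t) * 1 :=
          mul_le_mul hlt
            (Finset.prod_le_one (fun j _ => norm_nonneg _) (fun j _ => hle j))
            (Finset.prod_nonneg fun j _ => norm_nonneg _) h1t
      _ < 1 := by linarith
  have hsegsub : ∀ j, segment ℝ (z j) (z i0) ⊆ lemniscate p := by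
    intro j x hx
    rw [segment_eq_image] at hx
    obtain ⟨t, ht, rfl⟩ := hx
    rcases eq_or_lt_of_le ht.1 with h | h
    · rw [← h]; simpa using hroot j
    · exact hseg (z j) (fun k => hd1 j k) t h ht.2
  have hTsub : (⋃ j, segment ℝ (z j) (z i0)) ⊆ lemniscate p :=
    Set.iUnion_subset hsegsub
  have hTpre : IsPreconnected (⋃ j, segment ℝ (z j) (z i0)) :=
    isPreconnected_iUnion ⟨z i0, Set.mem_iInter.2 fun j => right_mem_segment ℝ _ _⟩
      (fun j => (convex_segment _ _).isPreconnected)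
  -- the key sub-lemma
  have key : ∀ u v : Set ℂ, IsOpen u → IsOpen v → lemniscate p ⊆ u ∪ v →
      lemniscate p ∩ (u ∩ v) = ∅ → (lemniscate p ∩ v).Nonempty →
      (⋃ j, segment ℝ (z j) (z i0)) ⊆ u → False := by
    intro u v hu hv hsub hdisj hvne hTu
    obtain ⟨b, hbΛ, hbv⟩ := hvne
    set V : Set ℂ := lemniscate p ∩ v with hV
    have hVopen : IsOpen V := hΛopen.inter hv
    have hVsub : V ⊆ lemniscate p := Set.inter_subset_left
    have hroots_not : ∀ j, z j ∉ V := by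
      intro j hj
      have hzu : z j ∈ u := hTu (Set.mem_iUnion.2 ⟨j, left_mem_segment ℝ _ _⟩)
      have hmem : z j ∈ lemniscate p ∩ (u ∩ v) := ⟨hj.1, hzu, hj.2⟩
      rw [hdisj] at hmem
      exact hmem
    have hclosure : ∀ m ∈ closure V, m ∈ lemniscate p → m ∈ V := by
      intro m hm hmΛ
      rcases hsub hmΛ with hmu | hmv
      · exfalso
        obtain ⟨x, hxu, hxΛ, hxv⟩ := mem_closure_iff.1 hm u hu hmu
        have hmem : x ∈ lemniscate p ∩ (u ∩ v) := ⟨hxΛ, hxu, hxv⟩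
        rw [hdisj] at hmem
        exact hmem
      · exact ⟨hmΛ, hmv⟩
    -- boundedness of the lemniscate
    obtain ⟨R, hR⟩ := hK.isBounded.subset_closedBall 0
    have hΛbdd : Bornology.IsBounded (lemniscate p) := by
      apply (Metric.isBounded_closedBall (x := (0:ℂ)) (r := R + 1)).subset
      intro w hw
      by_contra hwB
      rw [Metric.mem_closedBall, Complex.dist_eq, sub_zero, not_le] at hwB
      have hfac : ∀ j, 1 < ‖w - z j‖ := by
        intro j
        have hzj : ‖z j‖ ≤ R := by
          have := hR (hzK j)
          rwa [Metric.mem_closedBall, Complex.dist_eq, sub_zero] at this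
        have hns : ‖w‖ - ‖z j‖ ≤ ‖w - z j‖ := by
          simpa using norm_sub_norm_le w (z j)
        linarith
      have h1 : (1:ℝ) < ‖p.eval w‖ := by
        rw [habs]
        have := Finset.prod_lt_prod_of_nonempty
          (f := fun _ : Fin n => (1:ℝ)) (g := fun j => ‖w - z j‖)
          (fun i _ => one_pos) (fun j _ => hfac j) ⟨i0, Finset.mem_univ i0⟩
        simpa using this
      have : ‖p.eval w‖ < 1 := hw
      linarith
    have hccomp : IsCompact (closure V) := (hΛbdd.subset hVsub).isCompact_closure
    have hbV : b ∈ V := ⟨hbΛ, hbv⟩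
    obtain ⟨m, hmcl, hmmin⟩ := hccomp.exists_isMinOn ⟨b, subset_closure hbV⟩
      ((continuous_norm.comp p.continuous_aeval).continuousOn)
    have hmΛ : m ∈ lemniscate p := by
      have h1 : ‖p.eval m‖ ≤ ‖p.eval b‖ := hmmin (subset_closure hbV)
      exact lt_of_le_of_lt h1 hbΛ
    have hmV : m ∈ V := hclosure m hmcl hmΛ
    set W := connectedComponentIn V m with hW
    have hWopen : IsOpen W := hVopen.connectedComponentIn
    have hWpre : IsPreconnected W := isPreconnected_connectedComponentIn
    have hmW : m ∈ W := mem_connectedComponentIn hmV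
    have hWV : W ⊆ V := connectedComponentIn_subset V m
    have hpne : ∀ w ∈ W, p.eval w ≠ 0 := by
      intro w hw h0
      have hz0 : ∏ j, ‖w - z j‖ = 0 := by rw [← habs, h0, norm_zero]
      obtain ⟨j, -, hj⟩ := Finset.prod_eq_zero_iff.1 hz0
      have hwj : w = z j := sub_eq_zero.1 (norm_eq_zero.1 hj)
      exact hroots_not j (hwj ▸ hWV hw)
    have hdf : DifferentiableOn ℂ (fun w => (p.eval w)⁻¹) W :=
      fun w hw => ((p.differentiable.differentiableAt).inv (hpne w hw)).differentiableWithinAt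
    have hmpos : 0 < ‖p.eval m‖ :=
      norm_pos_iff.2 (hpne m hmW)
    have hmax : IsMaxOn (norm ∘ fun w => (p.eval w)⁻¹) W m := by
      intro w hw
      simp only [Function.comp_apply, norm_inv, Set.mem_setOf_eq]
      exact inv_anti₀ hmpos (hmmin (subset_closure (hWV hw)))
    have heq := Complex.eqOn_of_isPreconnected_of_isMaxOn_norm hWpre hWopen hdf hmW hmax
    have heval : ∀ w ∈ W, p.eval w = p.eval m := by
      intro w hw
      have h := heq hw
      simp only [Function.const_apply] at h
      exact inv_injective h
    have hWinf : W.Infinite := infinite_of_mem_nhds m (hWopen.mem_nhds hmW)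
    have hq : p - C (p.eval m) = 0 := by
      apply Polynomial.eq_zero_of_infinite_isRoot
      apply Set.Infinite.mono _ hWinf
      intro w hw
      simp [Polynomial.IsRoot, heval w hw]
    have hdeg : p.natDegree = n := by
      rw [hpz, Polynomial.natDegree_prod _ _ (fun j _ => Polynomial.X_sub_C_ne_zero (z j))]
      simp
    have hpc : p = C (p.eval m) := by
      have := sub_eq_zero.1 hq
      exact this
    rw [hpc, Polynomial.natDegree_C] at hdeg
    omega
  refine ⟨⟨z i0, hroot i0⟩, ⟨z i0, hroot i0⟩, ?_⟩
  intro u v hu hv hsub hsu hsv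
  by_contra hcon
  rw [Set.not_nonempty_iff_eq_empty] at hcon
  have hdisj : Disjoint (lemniscate p ∩ u) (lemniscate p ∩ v) := by
    rw [Set.disjoint_iff_inter_eq_empty]
    rw [← hcon]
    ext x
    simp only [Set.mem_inter_iff]
    tauto
  have hsub' : (⋃ j, segment ℝ (z j) (z i0)) ⊆ (lemniscate p ∩ u) ∪ (lemniscate p ∩ v) := by
    intro x hx
    have hxΛ := hTsub hx
    rcases hsub hxΛ with h | h
    · exact Or.inl ⟨hxΛ, h⟩
    · exact Or.inr ⟨hxΛ, h⟩
  rcases hTpre.subset_or_subset (hΛopen.inter hu) (hΛopen.inter hv) hdisj hsub' with hT | hT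
  · exact key u v hu hv hsub hcon hsv (fun x hx => (hT hx).2)
  · refine key v u hv hu (by rwa [Set.union_comm]) (by rw [Set.inter_comm v u]; exact hcon) hsu
      (fun x hx => (hT hx).2)
end
end

section
/- Let p be a nonconstant complex polynomial and r > 0, and let Λ_{p,r} = {z ∈ ℂ : |p(z)| < r}. If U₁ and U₂ are two distinct connected components of Λ_{p,r} and z₀ is a point lying in the closure of U₁ and in the closure of U₂, then p′(z₀) = 0. -/
open MeasureTheory Filter Polynomial Metric Set
open scoped Classical ENNReal NNReal Topology

noncomputable section

/-- If two distinct connected components of the `r`-lemniscate of a nonconstant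
polynomial `p` have a common closure point `z₀`, then `p'(z₀) = 0`. -/
theorem statement11 (p : Polynomial ℂ) (hp : 1 ≤ p.natDegree) (r : ℝ) (hr : 0 < r)
    (z₁ z₂ z₀ : ℂ)
    (h₁ : z₁ ∈ {z : ℂ | ‖p.eval z‖ < r})
    (h₂ : z₂ ∈ {z : ℂ | ‖p.eval z‖ < r})
    (hne : connectedComponentIn {z : ℂ | ‖p.eval z‖ < r} z₁ ≠
      connectedComponentIn {z : ℂ | ‖p.eval z‖ < r} z₂)
    (hz₀₁ : z₀ ∈ closure (connectedComponentIn {z : ℂ | ‖p.eval z‖ < r} z₁))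
    (hz₀₂ : z₀ ∈ closure (connectedComponentIn {z : ℂ | ‖p.eval z‖ < r} z₂)) :
    p.derivative.eval z₀ = 0 := by
  set Λ : Set ℂ := {z : ℂ | ‖p.eval z‖ < r} with hΛ
  have hΛopen : IsOpen Λ := by
    have : Continuous fun z : ℂ => ‖p.eval z‖ :=
      continuous_norm.comp p.continuous_aeval
    exact isOpen_lt this continuous_const
  -- key: any connected subset V of Λ meeting both components gives contradiction
  have key : ∀ V : Set ℂ, V ⊆ Λ → IsPreconnected V →
      (V ∩ connectedComponentIn Λ z₁).Nonempty →
      (V ∩ connectedComponentIn Λ z₂).Nonempty → False := by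
    intro V hVΛ hVc ⟨a, haV, ha₁⟩ ⟨b, hbV, hb₂⟩
    have h1 : V ⊆ connectedComponentIn Λ a := hVc.subset_connectedComponentIn haV hVΛ
    have h2 : V ⊆ connectedComponentIn Λ b := hVc.subset_connectedComponentIn hbV hVΛ
    exact hne ((connectedComponentIn_eq ha₁).trans
      ((connectedComponentIn_eq (h1 hbV)).trans (connectedComponentIn_eq hb₂).symm))
  -- z₀ ∉ Λ
  have hz₀Λ : z₀ ∉ Λ := by
    intro hz₀
    have hC : connectedComponentIn Λ z₀ ∈ 𝓝 z₀ :=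
      connectedComponentIn_mem_nhds (hΛopen.mem_nhds hz₀)
    have h1 := mem_closure_iff_nhds.1 hz₀₁ _ hC
    have h2 := mem_closure_iff_nhds.1 hz₀₂ _ hC
    exact key (connectedComponentIn Λ z₀) (connectedComponentIn_subset _ _)
      isPreconnected_connectedComponentIn
      (h1.mono (by intro x hx; exact ⟨hx.1, hx.2⟩))
      (h2.mono (by intro x hx; exact ⟨hx.1, hx.2⟩))
  -- |p z₀| ≤ r since z₀ ∈ closure Λ
  have hz₀cl : z₀ ∈ closure Λ :=
    closure_mono (connectedComponentIn_subset Λ z₁) hz₀₁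
  have habs : ‖p.eval z₀‖ = r := by
    have hle : ‖p.eval z₀‖ ≤ r := by
      have hcont : Continuous fun z : ℂ => ‖p.eval z‖ :=
        continuous_norm.comp p.continuous_aeval
      have : closure Λ ⊆ {z : ℂ | ‖p.eval z‖ ≤ r} :=
        closure_minimal (fun z hz => show ‖p.eval z‖ ≤ r from le_of_lt hz) (isClosed_le hcont continuous_const)
      exact this hz₀cl
    rcases lt_or_eq_of_le hle with h | h
    · exact absurd h hz₀Λ
    · exact h
  by_contra hd
  -- local homeomorphism near z₀
  have hf : HasStrictDerivAt (fun z => p.eval z) (p.derivative.eval z₀) z₀ :=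
    p.hasStrictDerivAt z₀
  set Φ := (hf.hasStrictFDerivAt_equiv hd).toOpenPartialHomeomorph (fun z => p.eval z) with hΦ
  have hΦcoe : (Φ : ℂ → ℂ) = fun z => p.eval z :=
    (hf.hasStrictFDerivAt_equiv hd).toOpenPartialHomeomorph_coe
  have hz₀src : z₀ ∈ Φ.source :=
    (hf.hasStrictFDerivAt_equiv hd).mem_toOpenPartialHomeomorph_source
  set w₀ : ℂ := p.eval z₀ with hw₀
  have hw₀tgt : w₀ ∈ Φ.target := by
    have := Φ.map_source hz₀src
    rwa [hΦcoe] at this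
  obtain ⟨δ, hδpos, hδ⟩ := Metric.isOpen_iff.1 Φ.open_target w₀ hw₀tgt
  set D : Set ℂ := Metric.ball w₀ δ ∩ Metric.ball 0 r with hD
  have hDconv : Convex ℝ D := (convex_ball w₀ δ).inter (convex_ball 0 r)
  have hDne : D.Nonempty := by
    set t : ℝ := min (1/2) (δ / (2 * r)) with ht
    have ht0 : 0 < t := lt_min (by norm_num) (div_pos hδpos (by linarith))
    have ht1 : t < 1 := lt_of_le_of_lt (min_le_left _ _) (by norm_num)
    refine ⟨(1 - (t : ℂ)) * w₀, ?_, ?_⟩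
    · rw [Metric.mem_ball]
      have : (1 - (t : ℂ)) * w₀ - w₀ = -(t : ℂ) * w₀ := by ring
      rw [dist_eq_norm, this]
      have : ‖-(t : ℂ) * w₀‖ = t * r := by
        rw [norm_mul, norm_neg, Complex.norm_real, Real.norm_of_nonneg ht0.le]
        simp [← habs, hw₀]
      rw [this]
      calc t * r ≤ (δ / (2 * r)) * r := by
            exact mul_le_mul_of_nonneg_right (min_le_right _ _) hr.le
        _ = δ / 2 := by field_simp
        _ < δ := by linarith
    · rw [Metric.mem_ball, dist_zero_right]
      have h1t : ‖(1 : ℂ) - (t : ℂ)‖ = 1 - t := by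
        rw [show (1 : ℂ) - (t : ℂ) = ((1 - t : ℝ) : ℂ) by push_cast; ring,
          Complex.norm_real, Real.norm_of_nonneg (by linarith)]
      rw [norm_mul, h1t]
      have : ‖w₀‖ = r := by simp [← habs, hw₀]
      rw [this]
      nlinarith
  have hDtgt : D ⊆ Φ.target := fun w hw => hδ hw.1
  set V : Set ℂ := Φ.symm '' D with hV
  have hVc : IsPreconnected V :=
    (hDconv.isPreconnected).image _ (Φ.continuousOn_symm.mono hDtgt)
  have hVΛ : V ⊆ Λ := by
    rintro z ⟨w, hw, rfl⟩
    have : p.eval (Φ.symm w) = w := by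
      have := Φ.right_inv (hDtgt hw)
      rwa [hΦcoe] at this
    simp only [hΛ, Set.mem_setOf_eq, this]
    simpa using Metric.mem_ball.1 hw.2
  -- neighborhood N of z₀ with N ∩ Λ ⊆ V
  have hN : Φ.source ∩ (fun z => p.eval z) ⁻¹' Metric.ball w₀ δ ∈ 𝓝 z₀ := by
    refine IsOpen.mem_nhds ?_ ⟨hz₀src, by simp [hδpos, hw₀]⟩
    exact Φ.open_source.inter ((Metric.isOpen_ball).preimage p.continuous_aeval)
  have hNV : (Φ.source ∩ (fun z => p.eval z) ⁻¹' Metric.ball w₀ δ) ∩ Λ ⊆ V := by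
    rintro z ⟨⟨hzsrc, hzball⟩, hzΛ⟩
    refine ⟨p.eval z, ⟨hzball, ?_⟩, ?_⟩
    · simpa [Metric.mem_ball, hΛ] using hzΛ
    · have := Φ.left_inv hzsrc
      rwa [hΦcoe] at this
  have h1 := mem_closure_iff_nhds.1 hz₀₁ _ hN
  have h2 := mem_closure_iff_nhds.1 hz₀₂ _ hN
  refine key V hVΛ hVc ?_ ?_
  · obtain ⟨a, haN, ha⟩ := h1
    exact ⟨a, hNV ⟨haN, connectedComponentIn_subset _ _ ha⟩, ha⟩
  · obtain ⟨a, haN, ha⟩ := h2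
    exact ⟨a, hNV ⟨haN, connectedComponentIn_subset _ _ ha⟩, ha⟩
end
end

section
/- For all real α, β > 0 there exists N such that for all n ≥ N the following holds: if p(z) = ∏_{j=1}^n (z − z_j) is a monic polynomial of degree n with zeros z_1, …, z_n ∈ ℂ satisfying (1) |p′(z_j)| ≥ exp(n^α) for all 1 ≤ j ≤ n, and (2) min_{j≠k} |z_j − z_k| ≥ 1/n^β, then the lemniscate Λ_p = {z ∈ ℂ : |p(z)| < 1} has exactly n connected components, each of which contains exactly one of the zeros z_j. -/
open MeasureTheory Filter Polynomial Metric Set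
open scoped Classical ENNReal NNReal Topology

noncomputable section

open Polynomial Metric Set Bornology Filter

lemma closure_ccIn_inter' {F : Set ℂ} (hF : IsOpen F) {w : ℂ} :
    closure (connectedComponentIn F w) ∩ F ⊆ connectedComponentIn F w := by
  rintro x ⟨hxc, hxF⟩
  by_contra hxU
  have hopen : IsOpen (connectedComponentIn F x) := hF.connectedComponentIn
  have hx' : x ∈ connectedComponentIn F x := mem_connectedComponentIn hxF
  obtain ⟨y, hy1, hy2⟩ := mem_closure_iff.1 hxc _ hopen hx'
  rw [connectedComponentIn_eq hy1, ← connectedComponentIn_eq hy2] at hx'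
  exact hxU hx'

lemma abs_eval_prod' {n : ℕ} (z : Fin n → ℂ) (x : ℂ) :
    ‖(∏ i, (X - C (z i)) : Polynomial ℂ).eval x‖ = ∏ i, ‖x - z i‖ := by
  rw [eval_prod, norm_prod]; simp

lemma abs_eval_deriv' {n : ℕ} (z : Fin n → ℂ) (j : Fin n) :
    ‖(∏ i, (X - C (z i)) : Polynomial ℂ).derivative.eval (z j)‖
      = ∏ i ∈ Finset.univ.erase j, ‖z j - z i‖ := by
  have h : (∏ i, (X - C (z i)) : Polynomial ℂ) = Lagrange.nodal Finset.univ z := rfl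
  rw [h, Lagrange.eval_nodal_derivative_eval_node_eq (Finset.mem_univ j), Lagrange.eval_nodal,
    norm_prod]

lemma conn_in_ball' {S : Set ℂ} (hS : IsPreconnected S) {c : ℂ} {r : ℝ} (hr : 0 < r)
    (hc : c ∈ S) (hd : S ∩ sphere c r = ∅) : S ⊆ ball c r := by
  apply hS.subset_left_of_subset_union isOpen_ball isClosed_closedBall.isOpen_compl
  · exact disjoint_left.mpr fun x hx hx' => hx' (ball_subset_closedBall hx)
  · intro x hx
    rcases lt_trichotomy (dist x c) r with h | h | h
    · exact Or.inl h
    · exact absurd ((eq_empty_iff_forall_notMem.1 hd x) ⟨hx, by simpa [mem_sphere, dist_eq_norm] using h⟩)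
        not_false
    · exact Or.inr (by simpa [mem_closedBall] using not_le.mpr h)
  · exact ⟨c, hc, mem_ball_self hr⟩

lemma exists_zero_in_component' (p : Polynomial ℂ)
    (hb : IsBounded {z : ℂ | ‖p.eval z‖ < 1}) {w : ℂ}
    (hw : ‖p.eval w‖ < 1) :
    ∃ x ∈ connectedComponentIn {z : ℂ | ‖p.eval z‖ < 1} w, p.eval x = 0 := by
  set Λ := {z : ℂ | ‖p.eval z‖ < 1} with hΛ
  have hcont : Continuous fun x => ‖p.eval x‖ :=
    continuous_norm.comp p.continuous
  have hΛo : IsOpen Λ := isOpen_lt hcont continuous_const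
  set U := connectedComponentIn Λ w with hU
  have hwΛ : w ∈ Λ := hw
  have hwU : w ∈ U := mem_connectedComponentIn hwΛ
  have hUo : IsOpen U := hΛo.connectedComponentIn
  have hUsub : U ⊆ Λ := connectedComponentIn_subset _ _
  have hUb : IsBounded U := hb.subset hUsub
  have hfr : ∀ x ∈ frontier U, ‖p.eval x‖ = 1 := by
    intro x hx
    have hxcl : x ∈ closure U := hx.1
    have hle : ‖p.eval x‖ ≤ 1 := by
      have h1 : x ∈ closure Λ := closure_mono hUsub hxcl
      have hcl : closure Λ ⊆ {z : ℂ | ‖p.eval z‖ ≤ 1} :=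
        closure_minimal (fun y (hy : ‖p.eval y‖ < 1) => le_of_lt hy)
          (isClosed_le hcont continuous_const)
      exact hcl h1
    have hge : x ∉ Λ := fun hxΛ =>
      hx.2 (by simpa [hUo.interior_eq] using closure_ccIn_inter' hΛo ⟨hxcl, hxΛ⟩)
    exact le_antisymm hle (not_lt.1 hge)
  by_contra hno
  push_neg at hno
  have hne : ∀ x ∈ closure U, p.eval x ≠ 0 := by
    intro x hx
    have hsub : closure U ⊆ U ∪ frontier U := by
      rw [frontier, hUo.interior_eq]
      intro y hy
      by_cases hyU : y ∈ U
      · exact Or.inl hyU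
      · exact Or.inr ⟨hy, hyU⟩
    rcases hsub hx with h | h
    · exact hno x h
    · intro h0
      have := hfr x h
      rw [h0] at this
      simp at this
  set f : ℂ → ℂ := fun x => (p.eval x)⁻¹ with hf
  have hdiff : DiffContOnCl ℂ f U :=
    ⟨DifferentiableOn.inv (p.differentiable.differentiableOn)
        (fun x hx => hne x (subset_closure hx)),
      ContinuousOn.inv₀ (p.continuous.continuousOn) hne⟩
  have hC : ∀ x ∈ frontier U, ‖f x‖ ≤ 1 := by
    intro x hx
    simp only [hf, norm_inv, hfr x hx, inv_one, le_refl]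
  have hle := Complex.norm_le_of_forall_mem_frontier_norm_le hUb hdiff hC (subset_closure hwU)
  rw [hf] at hle
  simp only [norm_inv] at hle
  have hpos : 0 < ‖p.eval w‖ := by
    rcases eq_or_lt_of_le (norm_nonneg (p.eval w)) with h | h
    · exact absurd (norm_eq_zero.1 h.symm) (hno w hwU)
    · exact h
  have h1 : 1 ≤ ‖p.eval w‖ := by
    rcases (inv_le_one_iff₀).1 hle with h | h
    · exact absurd h (not_le.2 hpos)
    · exact h
  exact absurd hw (not_lt.2 h1)
/-- For all `α, β > 0` there is `N` such that for all `n ≥ N`: any monic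
polynomial `p = ∏ (z - z_j)` of degree `n` with `|p'(z_j)| ≥ exp(n^α)` for all `j` and
`min_{j≠k} |z_j - z_k| ≥ 1/n^β` has a unit lemniscate with exactly `n` connected components,
each containing exactly one of the zeros. -/
theorem statement12 (α β : ℝ) (hα : 0 < α) (hβ : 0 < β) :
    ∃ N : ℕ, ∀ n : ℕ, N ≤ n → ∀ z : Fin n → ℂ,
      (∀ j, Real.exp ((n : ℝ) ^ α) ≤
        ‖(∏ i, (X - C (z i)) : Polynomial ℂ).derivative.eval (z j)‖) →
      (∀ j k, j ≠ k → 1 / (n : ℝ) ^ β ≤ ‖z j - z k‖) →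
      numComponents (lemniscate (∏ i, (X - C (z i)))) = n ∧
      ∀ w ∈ lemniscate (∏ i, (X - C (z i))),
        ∃! j : Fin n, z j ∈ connectedComponentIn (lemniscate (∏ i, (X - C (z i)))) w := by
  -- choose N from asymptotics
  have h1 : Tendsto (fun x : ℝ => x ^ ((β+1)/α) * Real.exp (-1 * x)) atTop (nhds 0) :=
    tendsto_rpow_mul_exp_neg_mul_atTop_nhds_zero _ 1 one_pos
  have h2 : Tendsto (fun n : ℕ => ((n:ℝ)) ^ α) atTop atTop :=
    (tendsto_rpow_atTop hα).comp tendsto_natCast_atTop_atTop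
  have h3 := (h1.comp h2).eventually (eventually_lt_nhds (show (0:ℝ) < 1/8 by norm_num))
  obtain ⟨N, hN⟩ := (h3.and (eventually_ge_atTop 1)).exists_forall_of_atTop
  refine ⟨N, fun n hn z hderiv hsep => ?_⟩
  have hn1 : 1 ≤ n := (hN n hn).2
  have hkey : ((n:ℝ)) ^ (β+1) * Real.exp (-((n:ℝ)^α)) < 1/8 := by
    have h5 := (hN n hn).1
    simp only [Function.comp, neg_one_mul] at h5
    have hc : (((n:ℝ)) ^ α) ^ ((β+1)/α) = (n:ℝ)^(β+1) := by
      rw [← Real.rpow_mul (Nat.cast_nonneg n)]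
      congr 1
      field_simp
    rwa [hc] at h5
  have npos : (0:ℝ) < n := by exact_mod_cast hn1
  set g : ℝ := ((n:ℝ))^α with hg
  set δ : ℝ := 2 * Real.exp (-g) with hδ
  have hδpos : 0 < δ := by positivity
  set t : ℝ := δ * (n:ℝ)^β with ht
  have htpos : 0 < t := by positivity
  have hnb : (0:ℝ) < (n:ℝ)^β := Real.rpow_pos_of_pos npos β
  have hpow : (n:ℝ)^β * (n:ℝ) = (n:ℝ)^(β+1) := by
    rw [Real.rpow_add npos, Real.rpow_one]
  have htn : t * n < 1/4 := by
    have : t * n = 2 * ((n:ℝ)^(β+1) * Real.exp (-g)) := by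
      rw [ht, hδ]; rw [← hpow]; ring
    rw [this]
    linarith [hkey]
  have ht1 : t < 1/4 := by
    have : t = t * 1 := by ring
    calc t = t * 1 := by ring
      _ ≤ t * n := by
          apply mul_le_mul_of_nonneg_left _ htpos.le
          exact_mod_cast hn1
      _ < 1/4 := htn
  have hδsep : δ < 1 / (n:ℝ)^β := by
    rw [lt_div_iff₀ hnb]
    calc δ * (n:ℝ)^β = t := ht.symm
      _ < 1 := by linarith
  -- abbreviations
  set p : Polynomial ℂ := ∏ i, (X - C (z i)) with hp
  set Λ : Set ℂ := {x : ℂ | ‖p.eval x‖ < 1} with hΛdef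
  have hΛeq : lemniscate p = Λ := rfl
  have hzmem : ∀ j, z j ∈ Λ := by
    intro j
    have : p.eval (z j) = 0 := by
      rw [hp, eval_prod]
      exact Finset.prod_eq_zero (Finset.mem_univ j) (by simp)
    simp [hΛdef, this]
  -- sphere estimate
  have hsphere : ∀ j, ∀ x ∈ sphere (z j) δ, 1 ≤ ‖p.eval x‖ := by
    intro j x hx
    have habsj : ‖x - z j‖ = δ := by
      rw [← Complex.dist_eq]; exact hx
    have hlow : ∀ i ∈ Finset.univ.erase j,
        ‖z j - z i‖ * (1 - t) ≤ ‖x - z i‖ := by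
      intro i hi
      have hij : j ≠ i := fun h => (Finset.mem_erase.1 hi).1 h.symm
      have ha : 1 / (n:ℝ)^β ≤ ‖z j - z i‖ := hsep j i hij
      have htri : ‖z j - z i‖ - δ ≤ ‖x - z i‖ := by
        have := norm_sub_le_norm_sub_add_norm_sub (z j) x (z i)
        have h2 : ‖z j - x‖ = δ := by
          rw [← habsj, norm_sub_rev]
        linarith [this, h2.le]
      have hδt : δ ≤ t * ‖z j - z i‖ := by
        have : t * ‖z j - z i‖ ≥ t * (1/(n:ℝ)^β) :=
          mul_le_mul_of_nonneg_left ha htpos.le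
        have heq : t * (1/(n:ℝ)^β) = δ := by
          rw [ht]; field_simp
        linarith
      nlinarith [norm_nonneg (z j - z i)]
    have hprod : ∏ i ∈ Finset.univ.erase j, (‖z j - z i‖ * (1 - t))
        ≤ ∏ i ∈ Finset.univ.erase j, ‖x - z i‖ := by
      apply Finset.prod_le_prod
      · intro i hi
        have := norm_nonneg (z j - z i)
        nlinarith
      · exact hlow
    have hcard : (Finset.univ.erase j).card = n - 1 := by
      rw [Finset.card_erase_of_mem (Finset.mem_univ j), Finset.card_univ, Fintype.card_fin]
    have hdistrib : ∏ i ∈ Finset.univ.erase j, (‖z j - z i‖ * (1 - t))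
        = (∏ i ∈ Finset.univ.erase j, ‖z j - z i‖) * (1 - t)^(n-1) := by
      rw [Finset.prod_mul_distrib, Finset.prod_const, hcard]
    have hD : Real.exp g ≤ ∏ i ∈ Finset.univ.erase j, ‖z j - z i‖ := by
      have := hderiv j
      rwa [abs_eval_deriv'] at this
    have hB : (1:ℝ)/2 ≤ (1 - t)^(n-1) := by
      have hb := one_add_mul_le_pow (show (-2:ℝ) ≤ -t by linarith) (n-1)
      have hc : ((n-1 : ℕ):ℝ) ≤ (n:ℝ) := by exact_mod_cast Nat.sub_le n 1
      have hc2 : ((n-1:ℕ):ℝ) * t ≤ n * t := mul_le_mul_of_nonneg_right hc htpos.le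
      have hc3 : (n:ℝ) * t < 1/4 := by linarith [htn]
      calc (1:ℝ)/2 ≤ 1 + ((n-1:ℕ):ℝ) * (-t) := by
            push_cast
            nlinarith
        _ ≤ (1 + -t)^(n-1) := hb
        _ = (1 - t)^(n-1) := by ring_nf
    have hfact : ‖p.eval x‖
        = δ * ∏ i ∈ Finset.univ.erase j, ‖x - z i‖ := by
      rw [hp, abs_eval_prod', ← Finset.mul_prod_erase _ _ (Finset.mem_univ j), habsj]
    rw [hfact]
    have hstep : Real.exp g * (1/2)
        ≤ (∏ i ∈ Finset.univ.erase j, ‖z j - z i‖) * (1 - t)^(n-1) :=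
      mul_le_mul hD hB (by norm_num) (le_trans (Real.exp_pos g).le hD)
    have hstep2 : Real.exp g * (1/2) ≤ ∏ i ∈ Finset.univ.erase j, ‖x - z i‖ := by
      calc Real.exp g * (1/2)
          ≤ (∏ i ∈ Finset.univ.erase j, ‖z j - z i‖) * (1 - t)^(n-1) := hstep
        _ = ∏ i ∈ Finset.univ.erase j, (‖z j - z i‖ * (1 - t)) := hdistrib.symm
        _ ≤ _ := hprod
    have hone : δ * (Real.exp g * (1/2)) = 1 := by
      rw [hδ, Real.exp_neg]
      field_simp
    calc (1:ℝ) = δ * (Real.exp g * (1/2)) := hone.symm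
      _ ≤ δ * ∏ i ∈ Finset.univ.erase j, ‖x - z i‖ :=
          mul_le_mul_of_nonneg_left hstep2 hδpos.le
  -- topological facts
  have hcont : Continuous fun x => ‖p.eval x‖ :=
    continuous_norm.comp p.continuous
  have hΛo : IsOpen Λ := isOpen_lt hcont continuous_const
  have hbnd : IsBounded Λ := by
    have hsub : Λ ⊆ ⋃ i, ball (z i) 1 := by
      intro x hx
      by_contra hxn
      simp only [mem_iUnion, mem_ball, not_exists, not_lt] at hxn
      have hge : ∀ i, 1 ≤ ‖x - z i‖ := by
        intro i
        have := hxn i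
        rwa [Complex.dist_eq] at this
      have : (1:ℝ) ≤ ‖p.eval x‖ := by
        rw [hp, abs_eval_prod']
        calc (1:ℝ) = ∏ _i : Fin n, 1 := by simp
          _ ≤ ∏ i, ‖x - z i‖ :=
            Finset.prod_le_prod (fun i _ => zero_le_one) (fun i _ => hge i)
      exact absurd (show ‖p.eval x‖ < 1 from hx) (not_lt.2 this)
    exact (isBounded_iUnion.2 (fun i => isBounded_ball)).subset hsub
  -- connected subsets of Λ containing z j are within ball (z j) δ
  have hball : ∀ j, ∀ S : Set ℂ, IsPreconnected S → S ⊆ Λ → z j ∈ S → S ⊆ ball (z j) δ := by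
    intro j S hS hSΛ hjS
    apply conn_in_ball' hS hδpos hjS
    rw [eq_empty_iff_forall_notMem]
    rintro x ⟨hxS, hxsph⟩
    have h1 : ‖p.eval x‖ < 1 := hSΛ hxS
    exact absurd h1 (not_lt.2 (hsphere j x hxsph))
  -- separation: z k in ball (z j) δ implies j = k
  have hsepball : ∀ j k, z k ∈ ball (z j) δ → j = k := by
    intro j k hk
    by_contra hne
    have h1 : 1 / (n:ℝ)^β ≤ ‖z j - z k‖ := hsep j k hne
    have h2 : ‖z j - z k‖ < δ := by
      rw [mem_ball, Complex.dist_eq] at hk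
      rwa [norm_sub_rev] at hk
    linarith
  -- uniqueness of the zero in each component
  have huniq : ∀ w ∈ Λ, ∀ j k : Fin n, z j ∈ connectedComponentIn Λ w →
      z k ∈ connectedComponentIn Λ w → j = k := by
    intro w hw j k hj hk
    have hpre : IsPreconnected (connectedComponentIn Λ w) := isPreconnected_connectedComponentIn
    have hsub : connectedComponentIn Λ w ⊆ Λ := connectedComponentIn_subset _ _
    exact hsepball j k (hball j _ hpre hsub hj hk)
  -- existence of a zero in each component
  have hex : ∀ w ∈ Λ, ∃ j : Fin n, z j ∈ connectedComponentIn Λ w := by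
    intro w hw
    obtain ⟨x, hxc, hx0⟩ := exists_zero_in_component' p hbnd (show ‖p.eval w‖ < 1 from hw)
    have : ∃ i, x = z i := by
      rw [hp, eval_prod] at hx0
      obtain ⟨i, _, hi⟩ := Finset.prod_eq_zero_iff.1 hx0
      refine ⟨i, ?_⟩
      simpa [sub_eq_zero] using hi
    obtain ⟨i, rfl⟩ := this
    exact ⟨i, hxc⟩
  constructor
  · -- counting components
    rw [hΛeq]
    have e : Fin n → ConnectedComponents Λ := fun j =>
      ConnectedComponents.mk ⟨z j, hzmem j⟩
    have hinjsur : Function.Bijective (fun j : Fin n =>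
        (ConnectedComponents.mk ⟨z j, hzmem j⟩ : ConnectedComponents Λ)) := by
      constructor
      · intro j k hjk
        have hcc : connectedComponent (⟨z j, hzmem j⟩ : Λ)
            = connectedComponent (⟨z k, hzmem k⟩ : Λ) :=
          ConnectedComponents.coe_eq_coe.1 hjk
        have hmem : (⟨z k, hzmem k⟩ : Λ) ∈ connectedComponent (⟨z j, hzmem j⟩ : Λ) := by
          rw [hcc]; exact mem_connectedComponent
        have : z k ∈ connectedComponentIn Λ (z j) := by
          rw [connectedComponentIn_eq_image (hzmem j)]
          exact ⟨_, hmem, rfl⟩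
        exact huniq (z j) (hzmem j) j k (mem_connectedComponentIn (hzmem j)) this
      · intro c
        obtain ⟨⟨w, hwΛ⟩, rfl⟩ := ConnectedComponents.surjective_coe c
        obtain ⟨j, hj⟩ := hex w hwΛ
        rw [connectedComponentIn_eq_image hwΛ] at hj
        obtain ⟨y, hy, hyv⟩ := hj
        refine ⟨j, ?_⟩
        have h1 : (ConnectedComponents.mk (⟨z j, hzmem j⟩ : Λ)) = ConnectedComponents.mk y :=
          congrArg ConnectedComponents.mk (Subtype.ext hyv).symm
        have h2 : (ConnectedComponents.mk y) = ConnectedComponents.mk (⟨w, hwΛ⟩ : Λ) :=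
          ConnectedComponents.coe_eq_coe.2 (connectedComponent_eq hy).symm
        exact h1.trans h2
    have := Nat.card_eq_of_bijective _ hinjsur
    rw [numComponents]
    rw [← this]
    simp
  · intro w hw
    rw [hΛeq] at hw ⊢
    obtain ⟨j, hj⟩ := hex w hw
    exact ⟨j, hj, fun k hk => huniq w hw k j hk hj⟩
end
end

section
/- Let K ⊆ ℂ be a compact set and let (μ_n) be a sequence of Borel probability measures supported in K converging in the weak-* topology to a Borel probability measure μ. Then for every nonempty compact set F ⊆ ℂ, limsup_{n→∞} sup_{z ∈ F} U_{μ_n}(z) ≤ sup_{z ∈ F} U_μ(z), where the potentials are regarded as functions with values in [−∞, ∞). -/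
open MeasureTheory Filter Polynomial Metric Set
open scoped Classical ENNReal NNReal Topology

noncomputable section

namespace Stmt13

/-- truncated kernel profile -/
def gj (C : ℝ) (j : ℕ) (d : ℝ) : ℝ :=
  min (max (Real.log (Real.exp (-(j:ℝ)) + d)) (((j:ℝ)+1)⁻¹ - Real.exp j * d)) C

lemma gj_le_C (C : ℝ) (j : ℕ) (d : ℝ) : gj C j d ≤ C := min_le_right _ _

lemma neg_le_gj {C d : ℝ} (hd : 0 ≤ d) (hC : 0 ≤ C) (j : ℕ) : -((j:ℝ)+1) ≤ gj C j d := by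
  refine le_min (le_trans ?_ (le_max_left _ _)) (by linarith)
  have h1 : Real.exp (-(j:ℝ)) ≤ Real.exp (-(j:ℝ)) + d := by linarith
  have := Real.log_le_log (Real.exp_pos _) h1
  rw [Real.log_exp] at this
  linarith

lemma abs_gj_le {C d : ℝ} (hd : 0 ≤ d) (hC : 0 ≤ C) (j : ℕ) : |gj C j d| ≤ (j:ℝ) + 1 + C := by
  rw [abs_le]
  constructor
  · have := neg_le_gj hd hC j; linarith
  · have := gj_le_C C j d; linarith

lemma log_le_gj {C d : ℝ} (hd : 0 ≤ d) (hC : 0 ≤ C) (hdC : Real.log d ≤ C) (j : ℕ) :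
    Real.log d ≤ gj C j d := by
  refine le_min ?_ hdC
  rcases eq_or_lt_of_le hd with h0 | h0
  · rw [← h0, Real.log_zero]
    refine le_trans ?_ (le_max_right _ _)
    have : (0:ℝ) < ((j:ℝ)+1)⁻¹ := by positivity
    nlinarith [Real.exp_pos (j:ℝ)]
  · refine le_trans (Real.log_le_log h0 (by nlinarith [Real.exp_pos (-(j:ℝ))])) (le_max_left _ _)

lemma gj_anti {C d : ℝ} (hd : 0 ≤ d) : Antitone (fun j : ℕ => gj C j d) := by
  apply antitone_nat_of_succ_le
  intro j
  unfold gj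
  refine min_le_min (max_le_max ?_ ?_) le_rfl
  · apply Real.log_le_log (by positivity)
    have : Real.exp (-((j:ℝ)+1)) ≤ Real.exp (-(j:ℝ)) := Real.exp_le_exp.2 (by linarith)
    push_cast
    linarith
  · have h1 : ((j:ℝ)+1+1)⁻¹ ≤ ((j:ℝ)+1)⁻¹ := by
      apply inv_anti₀ (by positivity) (by linarith)
    have h2 : Real.exp (j:ℝ) * d ≤ Real.exp ((j:ℝ)+1) * d :=
      mul_le_mul_of_nonneg_right (Real.exp_le_exp.2 (by linarith)) hd
    push_cast
    linarith

lemma log_lip {c : ℝ} (hc : 0 < c) {d d' : ℝ} (hd : 0 ≤ d) (hd' : 0 ≤ d') :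
    |Real.log (c + d) - Real.log (c + d')| ≤ c⁻¹ * |d - d'| := by
  have key : ∀ a b : ℝ, 0 ≤ a → 0 ≤ b → b ≤ a →
      Real.log (c + a) - Real.log (c + b) ≤ c⁻¹ * (a - b) := by
    intro a b ha hb hba
    have hcb : 0 < c + b := by linarith
    have hca : 0 < c + a := by linarith
    have h1 : Real.log (c + a) - Real.log (c + b) = Real.log ((c + a) / (c + b)) := by
      rw [Real.log_div hca.ne' hcb.ne']
    rw [h1]
    have h2 := Real.log_le_sub_one_of_pos (div_pos hca hcb)
    have h3 : (c + a) / (c + b) - 1 = (a - b) / (c + b) := by field_simp; ring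
    have h4 : (a - b) / (c + b) ≤ (a - b) / c := by
      apply div_le_div_of_nonneg_left (by linarith) hc (by linarith)
    calc Real.log ((c+a)/(c+b)) ≤ (c + a) / (c + b) - 1 := h2
      _ = (a - b) / (c + b) := h3
      _ ≤ (a - b) / c := h4
      _ = c⁻¹ * (a - b) := by ring
  rcases le_total d' d with h | h
  · have hm : Real.log (c + d') ≤ Real.log (c + d) :=
      Real.log_le_log (by linarith) (by linarith)
    rw [abs_of_nonneg (by linarith), abs_of_nonneg (by linarith)]
    exact key d d' hd hd' h
  · have hm : Real.log (c + d) ≤ Real.log (c + d') :=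
      Real.log_le_log (by linarith) (by linarith)
    rw [abs_sub_comm, abs_sub_comm d d', abs_of_nonneg (by linarith), abs_of_nonneg (by linarith)]
    exact key d' d hd' hd h

lemma gj_lip (C : ℝ) (j : ℕ) {d d' : ℝ} (hd : 0 ≤ d) (hd' : 0 ≤ d') :
    |gj C j d - gj C j d'| ≤ Real.exp j * |d - d'| := by
  unfold gj
  have h1 := abs_min_sub_min_le_max (max (Real.log (Real.exp (-(j:ℝ)) + d)) (((j:ℝ)+1)⁻¹ - Real.exp j * d)) C
    (max (Real.log (Real.exp (-(j:ℝ)) + d')) (((j:ℝ)+1)⁻¹ - Real.exp j * d')) C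
  have h2 := abs_max_sub_max_le_max (Real.log (Real.exp (-(j:ℝ)) + d)) (((j:ℝ)+1)⁻¹ - Real.exp j * d)
    (Real.log (Real.exp (-(j:ℝ)) + d')) (((j:ℝ)+1)⁻¹ - Real.exp j * d')
  have h3 : |Real.log (Real.exp (-(j:ℝ)) + d) - Real.log (Real.exp (-(j:ℝ)) + d')|
      ≤ Real.exp j * |d - d'| := by
    have := log_lip (Real.exp_pos (-(j:ℝ))) hd hd'
    rwa [← Real.exp_neg, neg_neg] at this
  have h4 : |(((j:ℝ)+1)⁻¹ - Real.exp j * d) - (((j:ℝ)+1)⁻¹ - Real.exp j * d')|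
      = Real.exp j * |d - d'| := by
    have he : (((j:ℝ)+1)⁻¹ - Real.exp (j:ℝ) * d) - (((j:ℝ)+1)⁻¹ - Real.exp (j:ℝ) * d')
        = Real.exp (j:ℝ) * (d' - d) := by ring
    rw [he, abs_mul, abs_of_nonneg (Real.exp_pos (j:ℝ)).le, abs_sub_comm]
  have h5 : |C - C| = 0 := by simp
  calc |_ - _| ≤ _ := h1
    _ ≤ Real.exp j * |d - d'| := by
        rw [h5]
        refine max_le (le_trans h2 (max_le (by linarith) (by rw [h4]))) (by positivity)

lemma gj_tendsto {C d : ℝ} (hd : 0 ≤ d) (hC : 0 ≤ C) (hdC : Real.log d ≤ C) :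
    Tendsto (fun j : ℕ => gj C j d) atTop (𝓝 (Real.log d)) := by
  rcases eq_or_lt_of_le hd with h0 | h0
  · -- d = 0
    subst h0
    rw [Real.log_zero]
    have hub : ∀ j : ℕ, gj C j 0 ≤ ((j:ℝ)+1)⁻¹ := by
      intro j
      refine le_trans (min_le_left _ _) ?_
      apply max_le
      · rw [add_zero, Real.log_exp]
        have : (0:ℝ) < ((j:ℝ)+1)⁻¹ := by positivity
        have : (0:ℝ) ≤ (j:ℝ) := Nat.cast_nonneg j
        linarith [show (0:ℝ) < ((j:ℝ)+1)⁻¹ by positivity]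
      · rw [mul_zero, sub_zero]
    have hlb : ∀ j : ℕ, 0 ≤ gj C j 0 := by
      intro j
      refine le_min (le_trans ?_ (le_max_right _ _)) hC
      rw [mul_zero, sub_zero]
      positivity
    have h1 : Tendsto (fun j : ℕ => ((j:ℝ)+1)⁻¹) atTop (𝓝 0) := by
      exact tendsto_one_div_add_atTop_nhds_zero_nat.congr (by intro n; rw [one_div])
    exact tendsto_of_tendsto_of_tendsto_of_le_of_le (tendsto_const_nhds (x := (0:ℝ)))
      h1 hlb hub
  · -- d > 0
    have hev : ∀ᶠ j : ℕ in atTop, gj C j d = min (Real.log (Real.exp (-(j:ℝ)) + d)) C := by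
      have htb : Tendsto (fun j : ℕ => ((j:ℝ)+1)⁻¹ - Real.exp (j:ℝ) * d) atTop atBot := by
        apply Filter.Tendsto.add_atBot (f := fun j : ℕ => ((j:ℝ)+1)⁻¹)
          (tendsto_one_div_add_atTop_nhds_zero_nat.congr (by intro n; rw [one_div]))
        apply tendsto_neg_atBot_iff.mpr
        exact Tendsto.atTop_mul_const h0
          (Real.tendsto_exp_atTop.comp tendsto_natCast_atTop_atTop)
      filter_upwards [htb.eventually_le_atBot (Real.log d)] with j hj
      unfold gj
      congr 1
      apply max_eq_left
      refine le_trans hj (Real.log_le_log h0 (by nlinarith [Real.exp_pos (-(j:ℝ))]))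
    have h1 : Tendsto (fun j : ℕ => Real.log (Real.exp (-(j:ℝ)) + d)) atTop (𝓝 (Real.log d)) := by
      have he : Tendsto (fun j : ℕ => Real.exp (-(j:ℝ)) + d) atTop (𝓝 (0 + d)) := by
        apply Tendsto.add_const
        exact Real.tendsto_exp_atBot.comp
          (tendsto_neg_atBot_iff.mpr tendsto_natCast_atTop_atTop)
      rw [zero_add] at he
      exact ((Real.continuousAt_log h0.ne').tendsto).comp he
    have h2 : Tendsto (fun j : ℕ => min (Real.log (Real.exp (-(j:ℝ)) + d)) C) atTop
        (𝓝 (min (Real.log d) C)) := h1.min tendsto_const_nhds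
    rw [min_eq_left hdC] at h2
    exact h2.congr' (hev.mono fun j hj => hj.symm)

end Stmt13

namespace Stmt13

/-- the truncated kernel -/
def G (C : ℝ) (j : ℕ) (z w : ℂ) : ℝ := gj C j (‖z - w‖)

lemma absd_nonneg (z w : ℂ) : 0 ≤ ‖z - w‖ := norm_nonneg _

lemma G_cont (C : ℝ) (j : ℕ) (z : ℂ) : Continuous (fun w => G C j z w) := by
  have hd : Continuous fun w : ℂ => ‖z - w‖ :=
    continuous_norm.comp (continuous_const.sub continuous_id)
  unfold G gj
  refine Continuous.min (Continuous.max ?_ ?_) continuous_const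
  · refine Continuous.log (continuous_const.add hd) fun w => ?_
    have := Real.exp_pos (-(j:ℝ))
    have := absd_nonneg z w
    positivity
  · exact continuous_const.sub (continuous_const.mul hd)

/-- truncated kernel as a bounded continuous function of `w` -/
def Gb (C : ℝ) (hC : 0 ≤ C) (j : ℕ) (z : ℂ) : BoundedContinuousFunction ℂ ℝ :=
  BoundedContinuousFunction.ofNormedAddCommGroup (fun w => G C j z w) (G_cont C j z)
    ((j:ℝ) + 1 + C) (fun w => by
      rw [Real.norm_eq_abs]
      exact abs_gj_le (absd_nonneg z w) hC j)

lemma Gb_coe (C : ℝ) (hC : 0 ≤ C) (j : ℕ) (z : ℂ) :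
    ⇑(Gb C hC j z) = fun w => G C j z w := rfl

lemma G_int {C : ℝ} (hC : 0 ≤ C) (j : ℕ) (z : ℂ) (ν : Measure ℂ) [IsFiniteMeasure ν] :
    Integrable (fun w => G C j z w) ν := by
  rw [← Gb_coe C hC j z]
  exact (Gb C hC j z).integrable ν

lemma kmeas (z : ℂ) : Measurable fun w : ℂ => Real.log (‖z - w‖) :=
  Real.measurable_log.comp (continuous_norm.measurable.comp
    (measurable_const.sub measurable_id))

lemma coe_toReal_ennreal {x : ℝ≥0∞} (hx : x ≠ ⊤) : ((x.toReal : ℝ) : EReal) = (x : EReal) := by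
  conv_rhs => rw [← ENNReal.ofReal_toReal hx]
  rw [EReal.coe_ennreal_ofReal, max_eq_left ENNReal.toReal_nonneg]

lemma ereal_aux {ν : Measure ℂ} [IsProbabilityMeasure ν] {f g : ℂ → ℝ}
    (hf : Measurable f) (hg : Integrable g ν) (hfg : ∀ᵐ w ∂ν, f w ≤ g w) :
    ((∫⁻ w, ENNReal.ofReal (f w) ∂ν : ℝ≥0∞) : EReal)
      - ((∫⁻ w, ENNReal.ofReal (-f w) ∂ν : ℝ≥0∞) : EReal) ≤ ((∫ w, g w ∂ν : ℝ) : EReal) := by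
  set A := ∫⁻ w, ENNReal.ofReal (f w) ∂ν with hA
  set B := ∫⁻ w, ENNReal.ofReal (-f w) ∂ν with hB
  by_cases hBtop : B = ⊤
  · rw [hBtop, EReal.coe_ennreal_top, EReal.sub_top]
    exact bot_le
  · have hAtop : A ≠ ⊤ := by
      have h1 : A ≤ ∫⁻ w, ENNReal.ofReal (g w) ∂ν :=
        lintegral_mono_ae (hfg.mono fun w hw => ENNReal.ofReal_le_ofReal hw)
      have h2 : ∫⁻ w, ENNReal.ofReal (g w) ∂ν ≤ ∫⁻ w, (‖g w‖₊ : ℝ≥0∞) ∂ν := by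
        refine lintegral_mono fun w => ?_
        rw [← enorm_eq_nnnorm, Real.enorm_eq_ofReal_abs]
        exact ENNReal.ofReal_le_ofReal (le_abs_self _)
      exact ((h1.trans h2).trans_lt hg.2).ne
    have hfi : Integrable f ν := by
      refine ⟨hf.aestronglyMeasurable, ?_⟩
      rw [hasFiniteIntegral_iff_norm]
      have hpt : ∀ w, ENNReal.ofReal ‖f w‖ = ENNReal.ofReal (f w) + ENNReal.ofReal (-f w) := by
        intro w
        rcases le_total 0 (f w) with h | h
        · have h1 : ENNReal.ofReal (-f w) = 0 := ENNReal.ofReal_of_nonpos (neg_nonpos.mpr h)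
          rw [Real.norm_eq_abs, abs_of_nonneg h, h1, add_zero]
        · have h1 : ENNReal.ofReal (f w) = 0 := ENNReal.ofReal_of_nonpos h
          rw [Real.norm_eq_abs, abs_of_nonpos h, h1, zero_add]
      rw [lintegral_congr hpt, lintegral_add_left hf.ennreal_ofReal]
      exact ENNReal.add_lt_top.mpr ⟨lt_top_iff_ne_top.mpr hAtop, lt_top_iff_ne_top.mpr hBtop⟩
    have key := integral_eq_lintegral_pos_part_sub_lintegral_neg_part hfi
    rw [← coe_toReal_ennreal hAtop, ← coe_toReal_ennreal hBtop, ← EReal.coe_sub, ← key]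
    exact EReal.coe_le_coe_iff.mpr (integral_mono_ae hfi hg hfg)

end Stmt13

namespace Stmt13

lemma dini_pointwise {μ : Measure ℂ} [IsProbabilityMeasure μ] {C u : ℝ} (hC : 0 ≤ C)
    {z : ℂ} (hkC : ∀ᵐ w ∂μ, Real.log (‖z - w‖) ≤ C)
    (hu : logPotential μ z < (u : EReal)) :
    ∃ j : ℕ, ∫ w, G C j z w ∂μ < u := by
  set A := ∫⁻ w, ENNReal.ofReal (Real.log (‖z - w‖)) ∂μ with hA
  set B := ∫⁻ w, ENNReal.ofReal (-Real.log (‖z - w‖)) ∂μ with hB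
  set Aj : ℕ → ℝ≥0∞ := fun j => ∫⁻ w, ENNReal.ofReal (G C j z w) ∂μ with hAj
  set Bj : ℕ → ℝ≥0∞ := fun j => ∫⁻ w, ENNReal.ofReal (-G C j z w) ∂μ with hBj
  have hGmeas : ∀ j, Measurable fun w => G C j z w := fun j => (G_cont C j z).measurable
  have hphi : ∀ j, ∫ w, G C j z w ∂μ = (Aj j).toReal - (Bj j).toReal := fun j =>
    integral_eq_lintegral_pos_part_sub_lintegral_neg_part (G_int hC j z μ)
  have hAjle : ∀ j, Aj j ≤ ENNReal.ofReal C := by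
    intro j
    calc Aj j ≤ ∫⁻ _, ENNReal.ofReal C ∂μ :=
          lintegral_mono fun w => ENNReal.ofReal_le_ofReal (gj_le_C C j _)
      _ = ENNReal.ofReal C := by simp [lintegral_const]
  have hBjfin : ∀ j, Bj j ≠ ⊤ := by
    intro j
    have : Bj j ≤ ∫⁻ _, ENNReal.ofReal ((j:ℝ) + 1 + C) ∂μ := by
      refine lintegral_mono fun w => ENNReal.ofReal_le_ofReal ?_
      have := abs_gj_le (absd_nonneg z w) hC j
      have := neg_le_gj (absd_nonneg z w) hC j
      have := gj_le_C C j (‖z - w‖)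
      unfold G
      linarith
    refine ((this.trans_lt ?_)).ne
    simp [lintegral_const]
  have hAfin : A ≠ ⊤ := by
    have : A ≤ ∫⁻ _, ENNReal.ofReal C ∂μ :=
      lintegral_mono_ae (hkC.mono fun w hw => ENNReal.ofReal_le_ofReal hw)
    refine (this.trans_lt ?_).ne
    simp [lintegral_const]
  -- monotonicity in j
  have hGanti : ∀ w, Antitone fun j : ℕ => G C j z w := fun w => gj_anti (absd_nonneg z w)
  have hAjanti : Antitone Aj := fun i i' h =>
    lintegral_mono fun w => ENNReal.ofReal_le_ofReal (hGanti w h)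
  have hBjmono : Monotone Bj := fun i i' h =>
    lintegral_mono fun w => ENNReal.ofReal_le_ofReal (neg_le_neg (hGanti w h))
  -- identification of limits
  have hiA : ⨅ j, Aj j = A := by
    rw [hAj, ← lintegral_iInf' (fun j => (hGmeas j).ennreal_ofReal.aemeasurable)
      (ae_of_all _ fun w i i' h => ENNReal.ofReal_le_ofReal (hGanti w h))
      (((hAjle 0).trans_lt ENNReal.ofReal_lt_top).ne)]
    refine lintegral_congr_ae (hkC.mono fun w hw => ?_)
    refine iInf_eq_of_tendsto (fun i i' h => ENNReal.ofReal_le_ofReal (hGanti w h)) ?_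
    exact (ENNReal.continuous_ofReal.tendsto _).comp (gj_tendsto (absd_nonneg z w) hC hw)
  have hiB : ⨆ j, Bj j = B := by
    rw [hBj, ← lintegral_iSup' (f := fun j w => ENNReal.ofReal (-G C j z w)) (fun j => ((hGmeas j).neg).ennreal_ofReal.aemeasurable)
      (ae_of_all _ fun w i i' h => ENNReal.ofReal_le_ofReal (neg_le_neg (hGanti w h)))]
    refine lintegral_congr_ae (hkC.mono fun w hw => ?_)
    refine iSup_eq_of_tendsto (fun i i' h => ENNReal.ofReal_le_ofReal (neg_le_neg (hGanti w h))) ?_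
    exact (ENNReal.continuous_ofReal.tendsto _).comp
      (((gj_tendsto (absd_nonneg z w) hC hw).neg))
  by_cases hBtop : B = ⊤
  · -- negative part blows up
    obtain ⟨j, hj⟩ : ∃ j, ENNReal.ofReal (C + |u| + 1) < Bj j := by
      refine lt_iSup_iff.mp ?_
      rw [hiB, hBtop]
      exact ENNReal.ofReal_lt_top
    refine ⟨j, ?_⟩
    rw [hphi j]
    have h1 : (Aj j).toReal ≤ C := ENNReal.toReal_le_of_le_ofReal hC (hAjle j)
    have h2 : C + |u| + 1 ≤ (Bj j).toReal := by
      have h3 := (ENNReal.toReal_lt_toReal ENNReal.ofReal_ne_top (hBjfin j)).mpr hj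
      rw [ENNReal.toReal_ofReal (by positivity)] at h3
      exact h3.le
    have := neg_abs_le u
    linarith
  · -- both parts finite: real convergence
    have hUeq : logPotential μ z = ((A.toReal - B.toReal : ℝ) : EReal) := by
      unfold logPotential
      rw [← hA, ← hB, ← coe_toReal_ennreal hAfin, ← coe_toReal_ennreal hBtop, ← EReal.coe_sub]
    rw [hUeq] at hu
    have hur : A.toReal - B.toReal < u := EReal.coe_lt_coe_iff.mp hu
    have htA : Tendsto Aj atTop (𝓝 A) := by rw [← hiA]; exact tendsto_atTop_iInf hAjanti
    have htB : Tendsto Bj atTop (𝓝 B) := by rw [← hiB]; exact tendsto_atTop_iSup hBjmono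
    have htAr : Tendsto (fun j => (Aj j).toReal) atTop (𝓝 A.toReal) :=
      (ENNReal.tendsto_toReal hAfin).comp htA
    have htBr : Tendsto (fun j => (Bj j).toReal) atTop (𝓝 B.toReal) :=
      (ENNReal.tendsto_toReal hBtop).comp htB
    have hev := (htAr.sub htBr).eventually_lt_const hur
    obtain ⟨j, hj⟩ := hev.exists
    exact ⟨j, by rw [hphi j]; exact hj⟩

end Stmt13

namespace Stmt13

lemma G_lip (C : ℝ) (j : ℕ) (z z' w : ℂ) :
    |G C j z w - G C j z' w| ≤ Real.exp j * dist z z' := by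
  have h1 := gj_lip C j (absd_nonneg z w) (absd_nonneg z' w)
  have h2 : |‖z - w‖ - ‖z' - w‖| ≤ dist z z' := by
    have := abs_dist_sub_le z z' w
    rwa [Complex.dist_eq, Complex.dist_eq] at this
  refine h1.trans ?_
  exact mul_le_mul_of_nonneg_left h2 (Real.exp_pos _).le

lemma phi_cont {C : ℝ} (hC : 0 ≤ C) (j : ℕ) (ν : Measure ℂ) [IsProbabilityMeasure ν] :
    Continuous (fun z => ∫ w, G C j z w ∂ν) := by
  refine LipschitzWith.continuous (K := (Real.exp j).toNNReal) ?_
  refine LipschitzWith.of_dist_le_mul fun z z' => ?_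
  rw [Real.dist_eq, Real.coe_toNNReal _ (Real.exp_pos (j:ℝ)).le]
  have hsub : (∫ w, G C j z w ∂ν) - (∫ w, G C j z' w ∂ν)
      = ∫ w, (G C j z w - G C j z' w) ∂ν :=
    (integral_sub (G_int hC j z ν) (G_int hC j z' ν)).symm
  rw [hsub]
  calc |∫ w, (G C j z w - G C j z' w) ∂ν| ≤ ∫ w, |G C j z w - G C j z' w| ∂ν := by
        simpa [Real.norm_eq_abs] using
          norm_integral_le_integral_norm (fun w => G C j z w - G C j z' w) (μ := ν)
    _ ≤ ∫ _, Real.exp j * dist z z' ∂ν := by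
        refine integral_mono ((G_int hC j z ν).sub (G_int hC j z' ν)).abs
          (integrable_const _) fun w => G_lip C j z z' w
    _ = Real.exp j * dist z z' := by simp [integral_const]

lemma dini_uniform {μ : Measure ℂ} [IsProbabilityMeasure μ] {C u : ℝ} (hC : 0 ≤ C)
    {F : Set ℂ} (hF : IsCompact F)
    (hkC : ∀ z ∈ F, ∀ᵐ w ∂μ, Real.log (‖z - w‖) ≤ C)
    (hlt : ∀ z ∈ F, logPotential μ z < (u : EReal)) :
    ∃ j : ℕ, ∀ z ∈ F, ∫ w, G C j z w ∂μ < u := by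
  by_contra hcon
  push_neg at hcon
  set E : ℕ → Set ℂ := fun j => F ∩ (fun z => ∫ w, G C j z w ∂μ) ⁻¹' (Ici u) with hE
  have hclosed : ∀ j, IsClosed (E j) :=
    fun j => hF.isClosed.inter (isClosed_Ici.preimage (phi_cont hC j μ))
  have hsub : ∀ j, E (j + 1) ⊆ E j := by
    intro j x hx
    have hmono : (∫ w, G C (j+1) x w ∂μ) ≤ ∫ w, G C j x w ∂μ :=
      integral_mono (G_int hC (j+1) x μ) (G_int hC j x μ)
        (fun w => gj_anti (absd_nonneg x w) (Nat.le_succ j))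
    exact ⟨hx.1, le_trans hx.2 hmono⟩
  have hne : ∀ j, (E j).Nonempty := by
    intro j
    obtain ⟨x, hxF, hxu⟩ := hcon j
    exact ⟨x, hxF, hxu⟩
  obtain ⟨x, hx⟩ := IsCompact.nonempty_iInter_of_sequence_nonempty_isCompact_isClosed E hsub hne
    (hF.of_isClosed_subset (hclosed 0) inter_subset_left) hclosed
  have hxF : x ∈ F := (mem_iInter.mp hx 0).1
  obtain ⟨j, hj⟩ := dini_pointwise hC (hkC x hxF) (hlt x hxF)
  exact absurd (mem_iInter.mp hx j).2 (not_le.mpr hj)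

end Stmt13

/-- If probability measures `μ_n` supported in a compact `K` converge weak-* to
`μ`, then for every nonempty compact `F`,
`limsup_n sup_F U_{μ_n} ≤ sup_F U_μ` (potentials valued in `[-∞, ∞)`). -/
theorem statement13 (K : Set ℂ) (hK : IsCompact K)
    (μs : ℕ → Measure ℂ) (hμs : ∀ n, μs n ∈ probOn K)
    (μ : Measure ℂ) (hμ : IsProbabilityMeasure μ)
    (hconv : ∀ f : BoundedContinuousFunction ℂ ℝ,
      Tendsto (fun n => ∫ z, f z ∂(μs n)) atTop (nhds (∫ z, f z ∂μ)))
    (F : Set ℂ) (hF : IsCompact F) (hFne : F.Nonempty) :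
    limsup (fun n => ⨆ z ∈ F, logPotential (μs n) z) atTop ≤ ⨆ z ∈ F, logPotential μ z := by
  classical
  haveI hP : ∀ n, IsProbabilityMeasure (μs n) := fun n => (hμs n).1
  -- μ is supported on K (portmanteau)
  have hμK : μ Kᶜ = 0 := by
    set P : ℕ → ProbabilityMeasure ℂ := fun n => ⟨μs n, (hμs n).1⟩ with hPdef
    set Pm : ProbabilityMeasure ℂ := ⟨μ, hμ⟩ with hPm
    have htend : Tendsto P atTop (𝓝 Pm) :=
      MeasureTheory.ProbabilityMeasure.tendsto_iff_forall_integral_tendsto.mpr fun f => hconv f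
    have hcl := MeasureTheory.ProbabilityMeasure.limsup_measure_closed_le_of_tendsto htend
      hK.isClosed
    have hone : ∀ n, (P n : Measure ℂ) K = 1 := by
      intro n
      have h1 := measure_add_measure_compl (μ := μs n) hK.measurableSet
      rw [(hμs n).2, add_zero, measure_univ] at h1
      exact h1
    have h1K : (1 : ℝ≥0∞) ≤ (μ : Measure ℂ) K := by
      have : (limsup (fun n => (P n : Measure ℂ) K) atTop) = 1 := by
        simp only [hone]
        exact limsup_const 1
      rw [← this]
      exact hcl
    have h2 := measure_add_measure_compl (μ := μ) hK.measurableSet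
    rw [measure_univ] at h2
    have hle : (μ : Measure ℂ) K ≤ 1 := by
      rw [← h2]; exact le_add_right le_rfl
    have heq : (μ : Measure ℂ) K = 1 := le_antisymm hle h1K
    rw [heq] at h2
    have h3 : (1:ℝ≥0∞) + μ Kᶜ = 1 + 0 := by rw [add_zero]; exact h2
    exact (ENNReal.add_right_inj (by simp)).mp h3
  -- geometric bound
  obtain ⟨R, hR⟩ := (hF.isBounded.union hK.isBounded).subset_closedBall 0
  set C := Real.log (1 + 2 * |R|) with hCdef
  have hC : 0 ≤ C := Real.log_nonneg (by have := abs_nonneg R; linarith)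
  have hkC : ∀ z ∈ F, ∀ w ∈ K, Real.log (‖z - w‖) ≤ C := by
    intro z hz w hw
    have hzb : ‖z‖ ≤ |R| := le_trans (by simpa using hR (Or.inl hz)) (le_abs_self R)
    have hwb : ‖w‖ ≤ |R| := le_trans (by simpa using hR (Or.inr hw)) (le_abs_self R)
    rcases eq_or_lt_of_le (Stmt13.absd_nonneg z w) with h0 | h0
    · rw [← h0, Real.log_zero]; exact hC
    · refine Real.log_le_log h0 ?_
      have : ‖z - w‖ = ‖z - w‖ := rfl
      rw [this]
      calc ‖z - w‖ ≤ ‖z‖ + ‖w‖ := norm_sub_le z w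
        _ ≤ 1 + 2 * |R| := by linarith
  have hae : ∀ (ν : Measure ℂ), ν Kᶜ = 0 → ∀ z ∈ F,
      ∀ᵐ w ∂ν, Real.log (‖z - w‖) ≤ C := by
    intro ν hν z hz
    have hKae : ∀ᵐ w ∂ν, w ∈ K := by
      rw [ae_iff]
      simpa [Set.compl_def] using hν
    exact hKae.mono fun w hw => hkC z hz w hw
  set T := ⨆ z ∈ F, logPotential μ z with hT
  suffices hclaim : ∀ t : ℝ, T < (t : EReal) →
      limsup (fun n => ⨆ z ∈ F, logPotential (μs n) z) atTop ≤ (t : EReal) by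
    by_contra hcontra
    push_neg at hcontra
    obtain ⟨x, hx1, hx2⟩ := EReal.exists_between_coe_real hcontra
    exact absurd (hclaim x hx1) (not_le.mpr hx2)
  intro t ht
  obtain ⟨u, hu1, hu2⟩ := EReal.exists_between_coe_real ht
  have hu2' : u < t := EReal.coe_lt_coe_iff.mp hu2
  have hlt : ∀ z ∈ F, logPotential μ z < (u : EReal) := by
    intro z hz
    exact lt_of_le_of_lt (le_iSup₂ (f := fun z (_ : z ∈ F) => logPotential μ z) z hz) hu1
  obtain ⟨j, hj⟩ := Stmt13.dini_uniform hC hF (hae μ hμK) hlt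
  set δ := (t - u) / (2 * Real.exp j) with hδdef
  have hδpos : 0 < δ := by
    have := Real.exp_pos (j:ℝ)
    apply div_pos (by linarith) (by linarith)
  obtain ⟨s, hsF, hscov⟩ := hF.elim_nhds_subcover (fun z => ball z δ)
    (fun z _ => ball_mem_nhds z hδpos)
  have hev : ∀ᶠ n in atTop, ∀ i ∈ s, ∫ w, Stmt13.G C j i w ∂(μs n) < u := by
    rw [Filter.eventually_all_finset]
    intro i hi
    have hconv_i := hconv (Stmt13.Gb C hC j i)
    rw [Stmt13.Gb_coe] at hconv_i
    exact hconv_i.eventually_lt_const (hj i (hsF i hi))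
  have hfinal : ∀ᶠ n in atTop, (⨆ z ∈ F, logPotential (μs n) z) ≤ (t : EReal) := by
    filter_upwards [hev] with n hn
    refine iSup₂_le fun z hz => ?_
    obtain ⟨i, hi, hzi⟩ := Set.mem_iUnion₂.mp (hscov hz)
    have hdom : logPotential (μs n) z ≤ ((∫ w, Stmt13.G C j z w ∂(μs n) : ℝ) : EReal) := by
      refine Stmt13.ereal_aux (Stmt13.kmeas z) (Stmt13.G_int hC j z (μs n)) ?_
      exact (hae (μs n) (hμs n).2 z hz).mono fun w hw =>
        Stmt13.log_le_gj (Stmt13.absd_nonneg z w) hC hw j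
    have hstep : ∫ w, Stmt13.G C j z w ∂(μs n)
        ≤ (∫ w, Stmt13.G C j i w ∂(μs n)) + Real.exp j * δ := by
      have hpt : ∀ w, Stmt13.G C j z w ≤ Stmt13.G C j i w + Real.exp j * δ := by
        intro w
        have h1 := Stmt13.G_lip C j z i w
        have h2 : dist z i ≤ δ := (mem_ball.mp hzi).le
        have h3 : Real.exp j * dist z i ≤ Real.exp j * δ :=
          mul_le_mul_of_nonneg_left h2 (Real.exp_pos _).le
        have h4 := (abs_le.mp h1).2
        linarith
      calc ∫ w, Stmt13.G C j z w ∂(μs n)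
          ≤ ∫ w, (Stmt13.G C j i w + Real.exp j * δ) ∂(μs n) :=
            integral_mono (Stmt13.G_int hC j z (μs n))
              ((Stmt13.G_int hC j i (μs n)).add (integrable_const _)) hpt
        _ = (∫ w, Stmt13.G C j i w ∂(μs n)) + Real.exp j * δ := by
            rw [integral_add (Stmt13.G_int hC j i (μs n)) (integrable_const _)]
            simp [integral_const]
    have hub : ∫ w, Stmt13.G C j z w ∂(μs n) ≤ t := by
      have hexp : Real.exp j * δ = (t - u) / 2 := by
        rw [hδdef]
        field_simp
      have := hn i hi
      rw [hexp] at hstep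
      linarith
    exact le_trans hdom (EReal.coe_le_coe_iff.mpr hub)
  exact limsup_le_of_le (by isBoundedDefault) hfinal
end
end

section
/- Let K ⊆ ℂ be a compact set with diameter d > 0 and let μ be a Borel probability measure on K such that for some constants ε₁, ε₂, M₁, M₂ ∈ (0, ∞) one has M₁·r^{ε₁} ≤ μ(B(z,r)) ≤ M₂·r^{ε₂} for every z ∈ K and every 0 < r ≤ d, where B(z,r) is the open disk of radius r about z. Then for every real p ≥ 1 there exist constants C₁, C₂ > 0 (depending only on d, p, ε₁, ε₂, M₁, M₂) such that C₁ ≤ ∫_K |log|z − w||^p dμ(w) ≤ C₂ for every z ∈ K. -/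
open MeasureTheory Filter Polynomial Metric Set
open scoped Classical ENNReal NNReal Topology

noncomputable section

-- Auxiliary lemmas for statement14
section Aux

lemma aux_log_bound {t d p δ L : ℝ} (hd : 0 < d) (hδ : 0 < δ) (hp : 1 ≤ p)
    (hL : max (Real.log d) 1 ≤ L) (ht0 : 0 ≤ t) (htd : t ≤ d) :
    |Real.log t| ^ p ≤ (δ ^ p)⁻¹ * t ^ (-(δ * p)) + L ^ p := by
  have hp0 : (0:ℝ) ≤ p := by linarith
  have hpne : p ≠ 0 := by positivity
  have hL1 : (1:ℝ) ≤ L := le_trans (le_max_right _ _) hL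
  have hLp : (0:ℝ) ≤ L ^ p := Real.rpow_nonneg (by linarith) p
  rcases eq_or_lt_of_le ht0 with h0 | ht0'
  · rw [← h0, Real.log_zero, abs_zero, Real.zero_rpow hpne,
      Real.zero_rpow (by simp [ne_of_gt (mul_pos hδ (by linarith : (0:ℝ) < p))])]
    simpa using hLp
  by_cases ht1 : t < 1
  · have hlt : Real.log t < 0 := Real.log_neg ht0' ht1
    have h1 : |Real.log t| = Real.log t⁻¹ := by rw [Real.log_inv, abs_of_neg hlt]
    have h2 : Real.log t⁻¹ ≤ (t⁻¹) ^ δ / δ := Real.log_le_rpow_div (by positivity) hδ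
    have h3 : (t⁻¹ : ℝ) ^ δ = t ^ (-δ) := by
      rw [Real.inv_rpow ht0, Real.rpow_neg ht0]
    have h4 : |Real.log t| ^ p ≤ ((t ^ (-δ)) / δ) ^ p := by
      refine Real.rpow_le_rpow (abs_nonneg _) ?_ hp0
      rw [h1, ← h3]; exact h2
    have h5 : ((t ^ (-δ)) / δ) ^ p = (δ ^ p)⁻¹ * t ^ (-(δ * p)) := by
      rw [Real.div_rpow (Real.rpow_nonneg ht0 _) hδ.le, ← Real.rpow_mul ht0, neg_mul,
        div_eq_mul_inv, mul_comm]
    have h6 : (0:ℝ) ≤ (δ ^ p)⁻¹ * t ^ (-(δ * p)) := by positivity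
    rw [h5] at h4; linarith
  · push_neg at ht1
    have habs : |Real.log t| = Real.log t := abs_of_nonneg (Real.log_nonneg ht1)
    have hlog : Real.log t ≤ L :=
      le_trans (le_trans (Real.log_le_log ht0' htd) (le_max_left _ _)) hL
    have h4 : |Real.log t| ^ p ≤ L ^ p :=
      Real.rpow_le_rpow (abs_nonneg _) (by rw [habs]; exact hlog) hp0
    have h6 : (0:ℝ) ≤ (δ ^ p)⁻¹ * t ^ (-(δ * p)) := by positivity
    linarith


lemma aux_tail (μ : Measure ℂ) [IsProbabilityMeasure μ] (z : ℂ) (β ε₂ M₂' : ℝ)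
    (hβ : 0 < β) (hε₂ : 0 < ε₂) (hM₂' : 0 < M₂') (he : β⁻¹ * ε₂ = 2)
    (hball : ∀ r : ℝ, 0 < r → μ (Metric.ball z r) ≤ ENNReal.ofReal (M₂' * r ^ ε₂)) :
    ∫⁻ w, ENNReal.ofReal (‖z - w‖ ^ (-β)) ∂μ ≤ ENNReal.ofReal (1 + M₂') := by
  have habs_m : Measurable (fun w : ℂ => ‖z - w‖) :=
    (continuous_norm.comp (continuous_const.sub continuous_id)).measurable
  have hfm : Measurable fun w : ℂ => ‖z - w‖ ^ (-β) := by fun_prop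
  have hfnn : 0 ≤ᵐ[μ] fun w : ℂ => ‖z - w‖ ^ (-β) :=
    Filter.Eventually.of_forall fun w => Real.rpow_nonneg (norm_nonneg _) _
  rw [lintegral_eq_lintegral_meas_lt μ hfnn hfm.aemeasurable]
  have hsub : ∀ t : ℝ, 0 < t →
      {w : ℂ | t < ‖z - w‖ ^ (-β)} ⊆ Metric.ball z (t ^ (-β⁻¹)) := by
    intro t ht w hw
    simp only [Set.mem_setOf_eq] at hw
    have hx0 : 0 < ‖z - w‖ := by
      rcases eq_or_lt_of_le (norm_nonneg (z - w)) with h | h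
      · rw [← h, Real.zero_rpow (by simpa using hβ.ne')] at hw; linarith
      · exact h
    have h1 : Real.log t < -β * Real.log (‖z - w‖) :=
      (Real.lt_rpow_iff_log_lt ht hx0).mp hw
    have h2 : Real.log (‖z - w‖) < -β⁻¹ * Real.log t := by
      have h1' := mul_lt_mul_of_pos_left h1 (inv_pos.mpr hβ)
      have heq : β⁻¹ * (-β * Real.log (‖z - w‖))
          = -Real.log (‖z - w‖) := by
        rw [neg_mul, mul_neg, ← mul_assoc, inv_mul_cancel₀ hβ.ne', one_mul]
      rw [heq] at h1'
      linarith
    have h3 : ‖z - w‖ < t ^ (-β⁻¹) := (Real.lt_rpow_iff_log_lt hx0 ht).mpr h2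
    rw [Metric.mem_ball, dist_comm, Complex.dist_eq]
    exact h3
  rw [← Set.Ioc_union_Ioi_eq_Ioi (zero_le_one (α := ℝ)),
    lintegral_union measurableSet_Ioi (Set.Ioc_disjoint_Ioi le_rfl)]
  have hpiece1 : (∫⁻ t in Set.Ioc (0:ℝ) 1, μ {w : ℂ | t < ‖z - w‖ ^ (-β)}) ≤ 1 := by
    refine le_trans (setLIntegral_mono (g := fun _ => (1:ℝ≥0∞)) measurable_const
      (fun t _ => prob_le_one)) ?_
    simp [Real.volume_Ioc]
  have hpiece2 : (∫⁻ t in Set.Ioi (1:ℝ), μ {w : ℂ | t < ‖z - w‖ ^ (-β)})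
      ≤ ENNReal.ofReal M₂' := by
    have hb : ∀ t ∈ Set.Ioi (1:ℝ),
        μ {w : ℂ | t < ‖z - w‖ ^ (-β)} ≤ ENNReal.ofReal (M₂' * t ^ (-2:ℝ)) := by
      intro t ht
      have ht0 : (0:ℝ) < t := lt_trans one_pos ht
      refine le_trans (measure_mono (hsub t ht0))
        (le_trans (hball _ (Real.rpow_pos_of_pos ht0 _)) (le_of_eq ?_))
      congr 1
      rw [← Real.rpow_mul ht0.le]
      congr 1
      rw [neg_mul, he]
    have hmeas : Measurable fun t : ℝ => ENNReal.ofReal (M₂' * t ^ (-2:ℝ)) := by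
      have : Measurable fun t : ℝ => t ^ (-2:ℝ) := by fun_prop
      fun_prop
    refine le_trans (setLIntegral_mono hmeas hb) (le_of_eq ?_)
    have e1 : (∫⁻ t in Set.Ioi (1:ℝ), ENNReal.ofReal (M₂' * t ^ (-2:ℝ)))
        = ENNReal.ofReal (∫ t in Set.Ioi (1:ℝ), M₂' * t ^ (-2:ℝ)) := by
      refine (MeasureTheory.ofReal_integral_eq_lintegral_ofReal ?_ ?_).symm
      · exact (integrableOn_Ioi_rpow_of_lt (by norm_num) one_pos).const_mul M₂'
      · exact ae_restrict_of_forall_mem measurableSet_Ioi fun t ht => by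
          have ht0 : (0:ℝ) < t := lt_trans one_pos ht
          positivity
    rw [e1, MeasureTheory.integral_const_mul, integral_Ioi_rpow_of_lt (by norm_num) one_pos]
    norm_num [Real.one_rpow]
  refine le_trans (add_le_add hpiece1 hpiece2) (le_of_eq ?_)
  rw [ENNReal.ofReal_add (by norm_num) hM₂'.le, ENNReal.ofReal_one]

end Aux

/-- If `K` is compact with diameter `d > 0` and `μ` is a probability measure on
`K` with `M₁ r^{ε₁} ≤ μ(B(z,r)) ≤ M₂ r^{ε₂}` for `z ∈ K`, `0 < r ≤ d`, then for every `p ≥ 1`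
the moments `∫ |log|z-w||^p dμ(w)` are bounded above and below by positive constants,
uniformly over `z ∈ K`. -/
theorem statement14 (K : Set ℂ) (hK : IsCompact K) (hd : 0 < Metric.diam K)
    (μ : Measure ℂ) (hμ : μ ∈ probOn K)
    (ε₁ ε₂ M₁ M₂ : ℝ) (hε₁ : 0 < ε₁) (hε₂ : 0 < ε₂) (hM₁ : 0 < M₁) (hM₂ : 0 < M₂)
    (hreg : ∀ z ∈ K, ∀ r : ℝ, 0 < r → r ≤ Metric.diam K →
      ENNReal.ofReal (M₁ * r ^ ε₁) ≤ μ (Metric.ball z r) ∧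
        μ (Metric.ball z r) ≤ ENNReal.ofReal (M₂ * r ^ ε₂))
    (p : ℝ) (hp : 1 ≤ p) :
    ∃ C₁ C₂ : ℝ, 0 < C₁ ∧ 0 < C₂ ∧ ∀ z ∈ K,
      C₁ ≤ (∫ w, |Real.log (‖z - w‖)| ^ p ∂μ) ∧
        (∫ w, |Real.log (‖z - w‖)| ^ p ∂μ) ≤ C₂ := by
    classical
  obtain ⟨hprob, hμK⟩ := hμ
  haveI := hprob
  set d := Metric.diam K with hdd
  have hd0 : (0:ℝ) < d := hd
  set M₂' : ℝ := max M₂ (d ^ (-ε₂)) with hM2'def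
  have hM₂' : 0 < M₂' := lt_of_lt_of_le hM₂ (le_max_left _ _)
  -- ball bound for all radii
  have hball : ∀ z ∈ K, ∀ r : ℝ, 0 < r →
      μ (Metric.ball z r) ≤ ENNReal.ofReal (M₂' * r ^ ε₂) := by
    intro z hz r hr
    rcases le_or_gt r d with h | h
    · refine le_trans (hreg z hz r hr h).2 (ENNReal.ofReal_le_ofReal ?_)
      exact mul_le_mul_of_nonneg_right (le_max_left _ _) (Real.rpow_nonneg hr.le _)
    · have h1 : μ (Metric.ball z r) ≤ 1 := prob_le_one
      have h2 : (1:ℝ) ≤ M₂' * r ^ ε₂ := by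
        have e1 : d ^ (-ε₂) * d ^ ε₂ = 1 := by
          rw [← Real.rpow_add hd0]; simp
        have e2 : d ^ ε₂ ≤ r ^ ε₂ := Real.rpow_le_rpow hd0.le h.le hε₂.le
        have e3 : d ^ (-ε₂) ≤ M₂' := le_max_right _ _
        nlinarith [Real.rpow_pos_of_pos hd0 (-ε₂), Real.rpow_pos_of_pos hd0 ε₂]
      refine le_trans h1 ?_
      rw [← ENNReal.ofReal_one]
      exact ENNReal.ofReal_le_ofReal h2
  -- no atoms on K
  have hatom : ∀ z ∈ K, μ {z} = 0 := by
    intro z hz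
    by_contra hne
    have hfin : μ {z} ≠ ⊤ := measure_ne_top μ _
    have hpos : 0 < (μ {z}).toReal := ENNReal.toReal_pos hne hfin
    set a := (μ {z}).toReal with ha
    set r : ℝ := (a / (2 * M₂')) ^ ε₂⁻¹ with hrdef
    have hr0 : 0 < r := Real.rpow_pos_of_pos (by positivity) _
    have hre : r ^ ε₂ = a / (2 * M₂') := Real.rpow_inv_rpow (by positivity) hε₂.ne'
    have h1 : μ {z} ≤ ENNReal.ofReal (M₂' * r ^ ε₂) :=
      le_trans (measure_mono (Set.singleton_subset_iff.mpr (Metric.mem_ball_self hr0)))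
        (hball z hz r hr0)
    rw [hre] at h1
    have he2 : M₂' * (a / (2 * M₂')) = a / 2 := by field_simp
    rw [he2] at h1
    have h3 : μ {z} = ENNReal.ofReal a := (ENNReal.ofReal_toReal hfin).symm
    rw [h3] at h1
    have h4 : ENNReal.ofReal (a/2) < ENNReal.ofReal a :=
      (ENNReal.ofReal_lt_ofReal_iff hpos).mpr (by linarith)
    exact absurd (lt_of_le_of_lt h1 h4) (lt_irrefl _)
  -- parameters
  set δ : ℝ := ε₂ / (2 * p) with hδdef
  have hδ : 0 < δ := by positivity
  set β : ℝ := δ * p with hβdef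
  have hβ : 0 < β := by positivity
  have hpne : p ≠ 0 := by positivity
  have hβe : β⁻¹ * ε₂ = 2 := by
    rw [hβdef, hδdef]
    field_simp
  set L : ℝ := max (Real.log d) 1 with hLdef
  have hL1 : (1:ℝ) ≤ L := le_max_right _ _
  have hLp : (0:ℝ) < L ^ p := Real.rpow_pos_of_pos (by linarith) _
  set Cδ : ℝ := (δ ^ p)⁻¹ with hCdef
  have hCδ : 0 < Cδ := by positivity
  set r : ℝ := min d (1/2) with hrdef
  have hr0 : 0 < r := lt_min hd0 (by norm_num)
  have hrd : r ≤ d := min_le_left _ _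
  have hrh : r ≤ 1/2 := min_le_right _ _
  refine ⟨Real.log 2 ^ p * (M₁ * r ^ ε₁), Cδ * (1 + M₂') + L ^ p, ?_, ?_, ?_⟩
  · have := Real.rpow_pos_of_pos (Real.log_pos one_lt_two) p
    have := Real.rpow_pos_of_pos hr0 ε₁
    positivity
  · positivity
  intro z hz
  have habs_m : Measurable (fun w : ℂ => ‖z - w‖) :=
    (continuous_norm.comp (continuous_const.sub continuous_id)).measurable
  have hFm : Measurable (fun w : ℂ => |Real.log (‖z - w‖)| ^ p) := by
    have h1 : Measurable fun w : ℂ => Real.log (‖z - w‖) :=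
      Real.measurable_log.comp habs_m
    have h2 : Measurable fun w : ℂ => |Real.log (‖z - w‖)| := h1.abs
    fun_prop
  have hfm : Measurable fun w : ℂ => ‖z - w‖ ^ (-β) := by fun_prop
  have hfnn : 0 ≤ᵐ[μ] fun w : ℂ => ‖z - w‖ ^ (-β) :=
    Filter.Eventually.of_forall fun w => Real.rpow_nonneg (norm_nonneg _) _
  have hJ : ∫⁻ w, ENNReal.ofReal (‖z - w‖ ^ (-β)) ∂μ ≤ ENNReal.ofReal (1 + M₂') :=
    aux_tail μ z β ε₂ M₂' hβ hε₂ hM₂' hβe (fun s hs => hball z hz s hs)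
  have hfint : Integrable (fun w : ℂ => ‖z - w‖ ^ (-β)) μ :=
    ⟨hfm.aestronglyMeasurable,
      (hasFiniteIntegral_iff_ofReal hfnn).mpr (lt_of_le_of_lt hJ ENNReal.ofReal_lt_top)⟩
  have hfval : ∫ w, ‖z - w‖ ^ (-β) ∂μ ≤ 1 + M₂' := by
    rw [integral_eq_lintegral_of_nonneg_ae hfnn hfm.aestronglyMeasurable]
    exact ENNReal.toReal_le_of_le_ofReal (by positivity) hJ
  have haeK : ∀ᵐ w ∂μ, w ∈ K := by
    rw [MeasureTheory.ae_iff]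
    exact hμK
  have hptwise : ∀ᵐ w ∂μ, |Real.log (‖z - w‖)| ^ p
      ≤ Cδ * ‖z - w‖ ^ (-β) + L ^ p := by
    filter_upwards [haeK] with w hw
    have htd : ‖z - w‖ ≤ d := by
      rw [← Complex.dist_eq]
      exact Metric.dist_le_diam_of_mem hK.isBounded hz hw
    have := aux_log_bound hd0 hδ hp (le_refl L) (norm_nonneg (z - w)) htd
    rw [hCdef, hβdef]
    exact this
  have hGint : Integrable (fun w : ℂ => Cδ * ‖z - w‖ ^ (-β) + L ^ p) μ :=
    (hfint.const_mul Cδ).add (integrable_const _)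
  have hFint : Integrable (fun w : ℂ => |Real.log (‖z - w‖)| ^ p) μ := by
    refine hGint.mono' hFm.aestronglyMeasurable ?_
    filter_upwards [hptwise] with w hw
    rw [Real.norm_eq_abs, abs_of_nonneg (Real.rpow_nonneg (abs_nonneg _) _)]
    exact hw
  constructor
  · -- lower bound
    set s : Set ℂ := Metric.ball z r \ {z} with hsdef
    have hs_meas : MeasurableSet s := measurableSet_ball.diff (measurableSet_singleton z)
    have hμs : μ s = μ (Metric.ball z r) := measure_diff_null (hatom z hz)
    have hμsr : M₁ * r ^ ε₁ ≤ (μ s).toReal := by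
      rw [hμs]
      exact (ENNReal.ofReal_le_iff_le_toReal (measure_ne_top μ _)).mp (hreg z hz r hr0 hrd).1
    have hind : ∀ w, s.indicator (fun _ => Real.log 2 ^ p) w
        ≤ |Real.log (‖z - w‖)| ^ p := by
      intro w
      by_cases hw : w ∈ s
      · rw [Set.indicator_of_mem hw]
        obtain ⟨hwb, hwz⟩ := hw
        have hx0 : 0 < ‖z - w‖ := by
          rw [norm_pos_iff]
          exact sub_ne_zero.mpr fun h => hwz (by simp [h.symm])
        have hxr : ‖z - w‖ < r := by
          rw [← Complex.dist_eq, dist_comm]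
          exact Metric.mem_ball.mp hwb
        have hlog : Real.log (‖z - w‖) ≤ -Real.log 2 := by
          have h2 : ‖z - w‖ ≤ 1/2 := le_trans hxr.le hrh
          calc Real.log (‖z - w‖) ≤ Real.log (1/2) := Real.log_le_log hx0 h2
            _ = -Real.log 2 := by rw [one_div, Real.log_inv]
        have habs2 : Real.log 2 ≤ |Real.log (‖z - w‖)| := by
          refine le_trans ?_ (neg_le_abs _)
          linarith
        exact Real.rpow_le_rpow (Real.log_nonneg one_le_two) habs2 (by linarith)
      · rw [Set.indicator_of_notMem hw]
        exact Real.rpow_nonneg (abs_nonneg _) _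
    have hindint : Integrable (s.indicator fun _ => Real.log 2 ^ p) μ :=
      (integrable_const _).indicator hs_meas
    have h1 : ∫ w, s.indicator (fun _ => Real.log 2 ^ p) w ∂μ
        = (μ s).toReal • Real.log 2 ^ p := integral_indicator_const _ hs_meas
    have h2 := integral_mono hindint hFint hind
    rw [h1, smul_eq_mul] at h2
    have hc : 0 < Real.log 2 ^ p := Real.rpow_pos_of_pos (Real.log_pos one_lt_two) p
    nlinarith
  · -- upper bound
    have h2 : (∫ w, |Real.log (‖z - w‖)| ^ p ∂μ)
        ≤ ∫ w, Cδ * ‖z - w‖ ^ (-β) + L ^ p ∂μ :=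
      integral_mono_ae hFint hGint hptwise
    have h3 : (∫ w, Cδ * ‖z - w‖ ^ (-β) + L ^ p ∂μ)
        = Cδ * (∫ w, ‖z - w‖ ^ (-β) ∂μ) + L ^ p := by
      rw [integral_add (hfint.const_mul Cδ) (integrable_const _),
        MeasureTheory.integral_const_mul, integral_const]
      simp [measure_univ]
    rw [h3] at h2
    have h4 : Cδ * (∫ w, ‖z - w‖ ^ (-β) ∂μ) ≤ Cδ * (1 + M₂') :=
      mul_le_mul_of_nonneg_left hfval hCδ.le
    linarith
end
end

section
/- For every integer n ≥ 1, the open set {z ∈ ℂ : |z^n − 1| < 1} has exactly n connected components. -/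
open MeasureTheory Filter Polynomial Metric Set
open scoped Classical ENNReal NNReal Topology

noncomputable section

section Statement18Aux

private lemma pi_div_le {n : ℕ} (hn : 1 ≤ n) : Real.pi / (2 * (n:ℝ)) ≤ Real.pi / 2 := by
  have hn' : (1:ℝ) ≤ n := by exact_mod_cast hn
  have hπ := Real.pi_pos
  rw [div_le_div_iff₀ (by positivity) (by norm_num)]
  nlinarith

/-- arg of a polar form. -/
private lemma arg_polar {r θ : ℝ} (hr : 0 < r) (hθ : θ ∈ Set.Ioc (-Real.pi) Real.pi) :
    Complex.arg ((r : ℂ) * Complex.exp ((θ:ℂ) * Complex.I)) = θ := by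
  rw [Complex.exp_mul_I]
  exact Complex.arg_mul_cos_add_sin_mul_I hr hθ

/-- arg after rotation, up to a multiple of 2π. -/
private lemma exists_arg_rot (z : ℂ) (hz : z ≠ 0) (φ : ℝ) :
    ∃ j : ℤ, Complex.arg (Complex.exp ((φ:ℂ) * Complex.I) * z)
      = Complex.arg z + φ + 2 * Real.pi * j := by
  have hπ := Real.pi_pos
  set x : ℝ := Complex.arg z + φ with hx
  set j : ℤ := ⌈x / (2 * Real.pi) - 1 / 2⌉ with hj
  have h1 : x / (2 * Real.pi) - 1 / 2 ≤ j := Int.le_ceil _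
  have h2 : (j:ℝ) < x / (2 * Real.pi) - 1 / 2 + 1 := Int.ceil_lt_add_one _
  set ψ : ℝ := x - 2 * Real.pi * j with hψ
  have hππ : (0:ℝ) < 2 * Real.pi := by positivity
  have hx2 : x / (2 * Real.pi) * (2 * Real.pi) = x := div_mul_cancel₀ _ (ne_of_gt hππ)
  have h2' : (j:ℝ) < x / (2 * Real.pi) + 1 / 2 := by linarith
  have hψ1 : ψ ∈ Set.Ioc (-Real.pi) Real.pi := by
    constructor
    · nlinarith [mul_lt_mul_of_pos_right h2' hππ]
    · nlinarith [mul_le_mul_of_nonneg_right h1 hππ.le]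
  have key : Complex.exp ((φ:ℂ) * Complex.I) * z = (‖z‖ : ℂ) * Complex.exp ((ψ:ℂ) * Complex.I) := by
    conv_lhs => rw [← Complex.norm_mul_exp_arg_mul_I z]
    rw [mul_comm (Complex.exp _) _, mul_assoc, ← Complex.exp_add]
    congr 1
    have : ((Complex.arg z : ℂ)) * Complex.I + (φ:ℂ) * Complex.I
        = (ψ:ℂ) * Complex.I + (j:ℂ) * (2 * (Real.pi:ℂ) * Complex.I) := by
      rw [hψ]; push_cast [hx]; ring
    rw [this, Complex.exp_add]
    rw [show ((j:ℂ)) * (2 * (Real.pi:ℂ) * Complex.I) = ((j:ℤ):ℂ) * (2 * (Real.pi:ℂ) * Complex.I) by push_cast; ring]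
    rw [Complex.exp_int_mul_two_pi_mul_I, mul_one]
  refine ⟨-j, ?_⟩
  rw [key, arg_polar (norm_pos_iff.mpr hz) hψ1, hψ, hx]
  push_cast
  ring

/-- membership of lemniscate in polar form. -/
private lemma mem_S_polar (n : ℕ) (hn : 1 ≤ n) {r θ : ℝ} (hr : 0 < r) :
    ‖((r:ℂ) * Complex.exp ((θ:ℂ) * Complex.I)) ^ n - 1‖ < 1 ↔
      r ^ n < 2 * Real.cos (n * θ) := by
  have hw : ((r:ℂ) * Complex.exp ((θ:ℂ) * Complex.I)) ^ n
      = ((r ^ n : ℝ) : ℂ) * Complex.exp ((((n:ℝ) * θ : ℝ) : ℂ) * Complex.I) := by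
    rw [mul_pow, ← Complex.exp_nat_mul]
    push_cast
    ring_nf
  rw [hw]
  set a : ℝ := r ^ n with ha
  have ha0 : 0 < a := pow_pos hr n
  set t : ℝ := (n:ℝ) * θ
  set w : ℂ := ((a:ℝ):ℂ) * Complex.exp ((t:ℂ) * Complex.I) - 1 with hwdef
  have hre : w.re = a * Real.cos t - 1 := by
    rw [hwdef, Complex.exp_mul_I, ← Complex.ofReal_cos, ← Complex.ofReal_sin]
    simp [Complex.sub_re, Complex.mul_re, Complex.cos_ofReal_re, Complex.sin_ofReal_re]
  have him : w.im = a * Real.sin t := by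
    rw [hwdef, Complex.exp_mul_I, ← Complex.ofReal_cos, ← Complex.ofReal_sin]
    simp [Complex.sub_im, Complex.mul_im, Complex.cos_ofReal_re, Complex.sin_ofReal_re, Complex.cos_ofReal_im, Complex.sin_ofReal_im]
  have hsq : (‖w‖) ^ 2 = a ^ 2 - 2 * a * Real.cos t + 1 := by
    rw [Complex.sq_norm, Complex.normSq_apply, hre, him]
    nlinarith [Real.sin_sq_add_cos_sq t]
  have habs : 0 ≤ ‖w‖ := norm_nonneg w
  constructor
  · intro h
    nlinarith
  · intro h
    nlinarith

private lemma ne_zero_of_mem_S {n : ℕ} (hn : 1 ≤ n) {z : ℂ}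
    (hz : ‖z ^ n - 1‖ < 1) : z ≠ 0 := by
  rintro rfl
  rw [zero_pow (by omega : n ≠ 0), zero_sub] at hz
  simp at hz

/-- the basic rotation. -/
private noncomputable def rot (n : ℕ) (k : ℤ) : ℂ :=
  Complex.exp (((2 * Real.pi * (k:ℝ) / (n:ℝ) : ℝ) : ℂ) * Complex.I)

private lemma rot_ne_zero (n : ℕ) (k : ℤ) : rot n k ≠ 0 := Complex.exp_ne_zero _

private lemma rot_add (n : ℕ) (a b : ℤ) : rot n a * rot n b = rot n (a + b) := by
  rw [rot, rot, rot, ← Complex.exp_add]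
  congr 1
  push_cast
  ring

private lemma rot_zero (n : ℕ) : rot n 0 = 1 := by
  rw [rot]
  norm_num

private lemma rot_pow {n : ℕ} (hn : 1 ≤ n) (k : ℤ) : rot n k ^ n = 1 := by
  have hn' : (n:ℂ) ≠ 0 := by exact_mod_cast (by omega : n ≠ 0)
  rw [rot, ← Complex.exp_nat_mul]
  rw [show (n:ℂ) * (((2 * Real.pi * (k:ℝ) / (n:ℝ) : ℝ) : ℂ) * Complex.I)
      = ((k:ℤ):ℂ) * (2 * (Real.pi:ℂ) * Complex.I) by push_cast; field_simp]
  exact Complex.exp_int_mul_two_pi_mul_I k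

private lemma rot_mul_pow {n : ℕ} (hn : 1 ≤ n) (k : ℤ) (z : ℂ) :
    (rot n k * z) ^ n = z ^ n := by
  rw [mul_pow, rot_pow hn, one_mul]

private lemma arg_rot_mul {n : ℕ} (k : ℤ) {z : ℂ} (hz : z ≠ 0) :
    ∃ j : ℤ, Complex.arg (rot n k * z)
      = Complex.arg z + 2 * Real.pi * (k:ℝ) / (n:ℝ) + 2 * Real.pi * j :=
  exists_arg_rot z hz (2 * Real.pi * (k:ℝ) / (n:ℝ))

/-- the k-th petal. -/
private def petal (n : ℕ) (k : ℤ) : Set ℂ :=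
  {z : ℂ | ‖z ^ n - 1‖ < 1 ∧
    Complex.arg (rot n (-k) * z) ∈ Set.Ioo (-(Real.pi / (2 * (n:ℝ)))) (Real.pi / (2 * (n:ℝ)))}

private lemma cos_pos_exists {t : ℝ} (h : 0 < Real.cos t) :
    ∃ m : ℤ, |t - 2 * Real.pi * m| < Real.pi / 2 := by
  have hπ := Real.pi_pos
  refine ⟨round (t / (2 * Real.pi)), ?_⟩
  set m : ℤ := round (t / (2 * Real.pi)) with hmdef
  have h1 : |t / (2 * Real.pi) - m| ≤ 1 / 2 := abs_sub_round _
  have h1' := abs_le.mp h1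
  have hππ : (0:ℝ) < 2 * Real.pi := by positivity
  have hx2 : t / (2 * Real.pi) * (2 * Real.pi) = t := div_mul_cancel₀ _ (ne_of_gt hππ)
  have h2 : |t - 2 * Real.pi * m| ≤ Real.pi := by
    rw [abs_le]
    constructor
    · nlinarith [mul_le_mul_of_nonneg_right h1'.2 hππ.le]
    · nlinarith [mul_le_mul_of_nonneg_right h1'.1 hππ.le]
  by_contra hcon
  push_neg at hcon
  set s : ℝ := t - 2 * Real.pi * m with hs
  have hcs : Real.cos s = Real.cos t := by
    rw [hs, show t - 2 * Real.pi * m = t + (((-m : ℤ)):ℝ) * (2 * Real.pi) by push_cast; ring,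
      Real.cos_add_int_mul_two_pi]
  rcases le_or_gt 0 s with h3 | h3
  · have hc : Real.cos s ≤ 0 := by
      apply Real.cos_nonpos_of_pi_div_two_le_of_le
      · rwa [abs_of_nonneg h3] at hcon
      · rw [abs_of_nonneg h3] at h2; linarith
    rw [hcs] at hc; linarith
  · have hc : Real.cos (-s) ≤ 0 := by
      apply Real.cos_nonpos_of_pi_div_two_le_of_le
      · rw [abs_of_neg h3] at hcon; linarith
      · rw [abs_of_neg h3] at h2; linarith
    rw [Real.cos_neg, hcs] at hc; linarith

private lemma mem_S_of_petal {n : ℕ} {k : ℤ} {z : ℂ} (h : z ∈ petal n k) :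
    ‖z ^ n - 1‖ < 1 := h.1

private lemma cos_n_arg_pos {n : ℕ} (hn : 1 ≤ n) {z : ℂ}
    (hz : ‖z ^ n - 1‖ < 1) :
    0 < Real.cos ((n:ℝ) * Complex.arg z) ∧
      (‖z‖) ^ n < 2 * Real.cos ((n:ℝ) * Complex.arg z) := by
  have hz0 : z ≠ 0 := ne_zero_of_mem_S hn hz
  have hr : 0 < ‖z‖ := norm_pos_iff.mpr hz0
  have hS : (‖z‖) ^ n < 2 * Real.cos ((n:ℝ) * Complex.arg z) := by
    rw [← mem_S_polar n hn hr, Complex.norm_mul_exp_arg_mul_I z]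
    exact hz
  exact ⟨by nlinarith [pow_pos hr n], hS⟩

private lemma exists_petal {n : ℕ} (hn : 1 ≤ n) {z : ℂ}
    (hz : ‖z ^ n - 1‖ < 1) :
    ∃ k : ℤ, 0 ≤ k ∧ k < n ∧ z ∈ petal n k := by
  have hπ := Real.pi_pos
  have hn' : (0:ℝ) < n := by exact_mod_cast hn
  have hnz : (n:ℤ) ≠ 0 := by exact_mod_cast (by omega : n ≠ 0)
  have hz0 : z ≠ 0 := ne_zero_of_mem_S hn hz
  have hcos := (cos_n_arg_pos hn hz).1
  obtain ⟨m, hm⟩ := cos_pos_exists hcos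
  set k : ℤ := m % n with hkdef
  refine ⟨k, Int.emod_nonneg m hnz, ?_, hz, ?_⟩
  · exact Int.emod_lt_of_pos m (by exact_mod_cast hn)
  · obtain ⟨i, hi⟩ := arg_rot_mul (n := n) (-k) hz0
    have hαIoc := Complex.arg_mem_Ioc (rot n (-k) * z)
    have hβ : |Complex.arg z - 2 * Real.pi * m / n| < Real.pi / (2 * n) := by
      have hβeq : Complex.arg z - 2 * Real.pi * m / n
          = ((n:ℝ) * Complex.arg z - 2 * Real.pi * m) / n := by field_simp
      rw [hβeq, abs_div, abs_of_pos hn', div_lt_div_iff₀ hn' (by positivity)]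
      nlinarith [abs_nonneg ((n:ℝ) * Complex.arg z - 2 * Real.pi * m)]
    have hβIoc : Complex.arg z - 2 * Real.pi * m / n ∈ Set.Ioc (-Real.pi) Real.pi := by
      have h1 := pi_div_le hn
      have h2 := abs_lt.mp hβ
      constructor <;> [linarith; linarith]
    have hd := Int.mul_ediv_add_emod m (n:ℤ)
    set d : ℤ := m / (n:ℤ) with hddef
    have hmr : (m:ℝ) = (n:ℝ) * d + k := by exact_mod_cast (by omega : m = (n:ℤ) * d + k)
    have hsum : Complex.arg (rot n (-k) * z) - (Complex.arg z - 2 * Real.pi * m / n)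
        = 2 * Real.pi * ((d:ℝ) + i) := by
      rw [hi, hmr]
      push_cast
      field_simp
      ring
    have hzero : ((d:ℝ) + i) = 0 := by
      have hlt : |Complex.arg (rot n (-k) * z) - (Complex.arg z - 2 * Real.pi * m / n)|
          < 2 * Real.pi := by
        rw [abs_lt]
        obtain ⟨a1, a2⟩ := hαIoc
        obtain ⟨b1, b2⟩ := hβIoc
        constructor <;> [linarith; linarith]
      rw [hsum, abs_mul, abs_of_pos (by positivity : (0:ℝ) < 2 * Real.pi)] at hlt
      have h1 : |(d:ℝ) + i| < 1 := by
        have := (mul_lt_mul_iff_right₀ (by positivity : (0:ℝ) < 2 * Real.pi)).mp (by linarith : 2 * Real.pi * |(d:ℝ) + i| < 2 * Real.pi * 1)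
        linarith
      have h2 : |((d + i : ℤ) : ℝ)| < 1 := by push_cast; exact h1
      have h3 : -1 < d + i ∧ d + i < 1 := by
        constructor <;> [exact_mod_cast (abs_lt.mp h2).1; exact_mod_cast (abs_lt.mp h2).2]
      have : d + i = 0 := by omega
      have := congrArg (fun x : ℤ => (x:ℝ)) this
      push_cast at this
      linarith
    have hαβ : Complex.arg (rot n (-k) * z) = Complex.arg z - 2 * Real.pi * m / n := by
      rw [hzero, mul_zero] at hsum
      linarith
    rw [hαβ]
    have h2 := abs_lt.mp hβ
    exact ⟨h2.1, h2.2⟩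

private lemma petal_disjoint {n : ℕ} (hn : 1 ≤ n) {k k' : ℤ}
    (hk0 : 0 ≤ k) (hk1 : k < n) (hk0' : 0 ≤ k') (hk1' : k' < n) {z : ℂ}
    (h1 : z ∈ petal n k) (h2 : z ∈ petal n k') : k = k' := by
  have hπ := Real.pi_pos
  have hn' : (0:ℝ) < n := by exact_mod_cast hn
  have hz0 : z ≠ 0 := ne_zero_of_mem_S hn h1.1
  obtain ⟨i, hi⟩ := arg_rot_mul (n := n) (-k) hz0
  obtain ⟨i', hi'⟩ := arg_rot_mul (n := n) (-k') hz0
  have ha := h1.2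
  have hb := h2.2
  rw [Set.mem_Ioo] at ha hb
  -- α - α' = (2π/n) * ((k' - k) + n (i - i'))
  have hsum : Complex.arg (rot n (-k) * z) - Complex.arg (rot n (-k') * z)
      = (2 * Real.pi / n) * (((k' - k : ℤ) : ℝ) + n * ((i - i' : ℤ) : ℝ)) := by
    rw [hi, hi']
    push_cast
    field_simp
    ring
  set D : ℤ := (k' - k) + n * (i - i') with hD
  have habs : |Complex.arg (rot n (-k) * z) - Complex.arg (rot n (-k') * z)|
      < Real.pi / n := by
    have hhalf : Real.pi / (2 * (n:ℝ)) + Real.pi / (2 * (n:ℝ)) = Real.pi / n := by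
      field_simp; ring
    rw [abs_lt]
    constructor <;> [linarith [ha.1, hb.2]; linarith [ha.2, hb.1]]
  have hDr : ((D:ℝ)) = ((k' - k : ℤ) : ℝ) + n * ((i - i' : ℤ) : ℝ) := by
    rw [hD]; push_cast; ring
  rw [hsum, ← hDr, abs_mul, abs_of_pos (by positivity : (0:ℝ) < 2 * Real.pi / n)] at habs
  have hD1 : |(D:ℝ)| < 1 / 2 := by
    have h := mul_lt_mul_of_pos_right habs hn'
    rw [div_mul_cancel₀ _ (ne_of_gt hn')] at h
    rw [show 2 * Real.pi / (n:ℝ) * |(D:ℝ)| * (n:ℝ)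
        = 2 * Real.pi * |(D:ℝ)| * ((n:ℝ) / (n:ℝ)) from by ring,
      div_self (ne_of_gt hn'), mul_one] at h
    nlinarith [abs_nonneg ((D:ℝ))]
  have hD0 : D = 0 := by
    have h2' : |((D : ℤ) : ℝ)| < 1 := by linarith
    have h3 : -1 < D ∧ D < 1 := by
      constructor <;> [exact_mod_cast (abs_lt.mp h2').1; exact_mod_cast (abs_lt.mp h2').2]
    omega
  -- k' - k = n * (i' - i), |k' - k| < n forces k = k'
  have hn2 : (0:ℤ) < (n:ℤ) := by exact_mod_cast hn
  have hneg : (n:ℤ) * (i - i') = -((n:ℤ) * (i' - i)) := by ring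
  have hE : k' - k = (n:ℤ) * (i' - i) := by omega
  rcases lt_trichotomy (i' - i) 0 with h | h | h
  · have h2 : (n:ℤ) * (i' - i) ≤ (n:ℤ) * (-1) :=
      mul_le_mul_of_nonneg_left (by omega) (by omega)
    omega
  · rw [h, mul_zero] at hE; omega
  · have h2 : (n:ℤ) * 1 ≤ (n:ℤ) * (i' - i) :=
      mul_le_mul_of_nonneg_left (by omega) (by omega)
    omega

private lemma isOpen_S (n : ℕ) : IsOpen {z : ℂ | ‖z ^ n - 1‖ < 1} :=
  isOpen_lt (continuous_norm.comp ((continuous_pow n).sub continuous_const))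
    continuous_const

private lemma petal_isOpen {n : ℕ} (hn : 1 ≤ n) (k : ℤ) : IsOpen (petal n k) := by
  rw [isOpen_iff_mem_nhds]
  intro z hz
  have hπ := Real.pi_pos
  have hz0 : z ≠ 0 := ne_zero_of_mem_S hn hz.1
  have hrot0 : rot n (-k) * z ≠ 0 := mul_ne_zero (rot_ne_zero n (-k)) hz0
  have hre : 0 < (rot n (-k) * z).re := by
    have h := hz.2
    rw [Set.mem_Ioo] at h
    have hb := pi_div_le hn
    have habs : |Complex.arg (rot n (-k) * z)| < Real.pi / 2 := by
      rw [abs_lt]; constructor <;> [linarith [h.1]; linarith [h.2]]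
    rcases Complex.abs_arg_lt_pi_div_two_iff.mp habs with h' | h'
    · exact h'
    · exact absurd h' hrot0
  have hca : ContinuousAt (fun w => Complex.arg (rot n (-k) * w)) z :=
    (Complex.continuousAt_arg (by rw [Complex.mem_slitPlane_iff]; left; exact hre)).comp
      (continuous_mul_left (rot n (-k))).continuousAt
  have h1 : {w : ℂ | ‖w ^ n - 1‖ < 1} ∈ 𝓝 z := (isOpen_S n).mem_nhds hz.1
  have h2 : (fun w => Complex.arg (rot n (-k) * w)) ⁻¹'
      (Set.Ioo (-(Real.pi / (2 * (n:ℝ)))) (Real.pi / (2 * (n:ℝ)))) ∈ 𝓝 z :=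
    hca.preimage_mem_nhds (Ioo_mem_nhds hz.2.1 hz.2.2)
  exact Filter.mem_of_superset (Filter.inter_mem h1 h2) fun w hw => ⟨hw.1, hw.2⟩

private noncomputable def phi (n : ℕ) : ℝ × ℝ → ℂ := fun p =>
  ((p.2 * (2 * Real.cos ((n:ℝ) * p.1)) ^ (1 / (n:ℝ)) : ℝ) : ℂ) *
    Complex.exp ((p.1 : ℂ) * Complex.I)

private lemma petal_zero_eq {n : ℕ} (hn : 1 ≤ n) :
    petal n 0 = phi n '' (Set.Ioo (-(Real.pi / (2 * (n:ℝ)))) (Real.pi / (2 * (n:ℝ)))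
      ×ˢ Set.Ioo (0:ℝ) 1) := by
  have hπ := Real.pi_pos
  have hn' : (0:ℝ) < n := by exact_mod_cast hn
  have hnne : (n:ℝ) ≠ 0 := ne_of_gt hn'
  have hb := pi_div_le hn
  have hrot1 : rot n (-(0:ℤ)) = 1 := by rw [neg_zero, rot_zero]
  have hrpow : ∀ c : ℝ, 0 < c → (c ^ (1 / (n:ℝ))) ^ n = c := by
    intro c hc
    rw [← Real.rpow_natCast (c ^ (1 / (n:ℝ))) n, ← Real.rpow_mul hc.le]
    rw [one_div, inv_mul_cancel₀ hnne, Real.rpow_one]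
  ext z
  constructor
  · intro hz
    have hz0 : z ≠ 0 := ne_zero_of_mem_S hn hz.1
    have hr : 0 < ‖z‖ := norm_pos_iff.mpr hz0
    have harg : Complex.arg z ∈ Set.Ioo (-(Real.pi / (2 * (n:ℝ)))) (Real.pi / (2 * (n:ℝ))) := by
      have := hz.2; rwa [hrot1, one_mul] at this
    obtain ⟨hcos, hS⟩ := cos_n_arg_pos hn hz.1
    set c : ℝ := 2 * Real.cos ((n:ℝ) * Complex.arg z) with hc
    have hc0 : 0 < c := by positivity
    have hcp : 0 < c ^ (1 / (n:ℝ)) := Real.rpow_pos_of_pos hc0 _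
    set s : ℝ := ‖z‖ / c ^ (1 / (n:ℝ)) with hs
    refine ⟨(Complex.arg z, s), ⟨harg, ?_, ?_⟩, ?_⟩
    · exact div_pos hr hcp
    · rw [hs, div_lt_one hcp]
      by_contra hcon
      push_neg at hcon
      have := pow_le_pow_left₀ hcp.le hcon n
      rw [hrpow c hc0] at this
      linarith
    · show ((s * c ^ (1 / (n:ℝ)) : ℝ) : ℂ) * Complex.exp ((Complex.arg z : ℂ) * Complex.I) = z
      rw [hs, div_mul_cancel₀ _ (ne_of_gt hcp)]
      exact Complex.norm_mul_exp_arg_mul_I z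
  · rintro ⟨⟨θ, s⟩, ⟨hθ, hs0, hs1⟩, rfl⟩
    have hθ' := hθ
    rw [Set.mem_Ioo] at hθ'
    have hcos : 0 < Real.cos ((n:ℝ) * θ) := by
      apply Real.cos_pos_of_mem_Ioo
      constructor
      · have : (n:ℝ) * (-(Real.pi / (2 * (n:ℝ)))) < (n:ℝ) * θ :=
          mul_lt_mul_of_pos_left hθ'.1 hn'
        calc -(Real.pi / 2) = (n:ℝ) * (-(Real.pi / (2 * (n:ℝ)))) := by field_simp
          _ < (n:ℝ) * θ := this
      · have : (n:ℝ) * θ < (n:ℝ) * (Real.pi / (2 * (n:ℝ))) :=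
          mul_lt_mul_of_pos_left hθ'.2 hn'
        calc (n:ℝ) * θ < (n:ℝ) * (Real.pi / (2 * (n:ℝ))) := this
          _ = Real.pi / 2 := by field_simp
    set c : ℝ := 2 * Real.cos ((n:ℝ) * θ) with hc
    have hc0 : 0 < c := by positivity
    have hcp : 0 < c ^ (1 / (n:ℝ)) := Real.rpow_pos_of_pos hc0 _
    set r : ℝ := s * c ^ (1 / (n:ℝ)) with hr
    have hr0 : 0 < r := mul_pos hs0 hcp
    have hrn : r ^ n < c := by
      rw [hr, mul_pow, hrpow c hc0]
      have hsn : s ^ n < 1 := pow_lt_one₀ hs0.le hs1 (by omega)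
      nlinarith
    have hθIoc : θ ∈ Set.Ioc (-Real.pi) Real.pi := by
      constructor <;> [linarith [hθ'.1]; linarith [hθ'.2]]
    constructor
    · show ‖(((r:ℝ):ℂ) * Complex.exp ((θ:ℂ) * Complex.I)) ^ n - 1‖ < 1
      rw [mem_S_polar n hn hr0]
      exact hrn
    · rw [hrot1, one_mul]
      show Complex.arg (((r:ℝ):ℂ) * Complex.exp ((θ:ℂ) * Complex.I)) ∈ _
      rw [arg_polar hr0 hθIoc]
      exact hθ

private lemma petal_zero_preconnected {n : ℕ} (hn : 1 ≤ n) : IsPreconnected (petal n 0) := by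
  rw [petal_zero_eq hn]
  apply IsPreconnected.image
  · exact ((convex_Ioo _ _).prod (convex_Ioo 0 1)).isPreconnected
  · apply Continuous.continuousOn
    have hrpow : Continuous (fun x : ℝ => x ^ (1 / (n:ℝ))) :=
      continuous_iff_continuousAt.mpr fun x =>
        Real.continuousAt_rpow_const x _ (Or.inr (by positivity))
    apply Continuous.mul
    · apply Complex.continuous_ofReal.comp
      exact continuous_snd.mul (hrpow.comp (continuous_const.mul
        (Real.continuous_cos.comp (continuous_const.mul continuous_fst))))
    · exact Complex.continuous_exp.comp
        ((Complex.continuous_ofReal.comp continuous_fst).mul continuous_const)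

private lemma petal_zero_nonempty {n : ℕ} (hn : 1 ≤ n) : (petal n 0).Nonempty := by
  rw [petal_zero_eq hn]
  apply Set.Nonempty.image
  refine ⟨(0, 1/2), ?_, ?_⟩ <;> constructor <;> norm_num
  · positivity
  · positivity

private lemma petal_eq_image {n : ℕ} (hn : 1 ≤ n) (k : ℤ) :
    petal n k = (fun w => rot n k * w) '' petal n 0 := by
  have hinv : rot n k * rot n (-k) = 1 := by
    rw [rot_add, add_neg_cancel, rot_zero]
  have hinv' : rot n (-k) * rot n k = 1 := by
    rw [rot_add, neg_add_cancel, rot_zero]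
  ext z
  constructor
  · intro hz
    refine ⟨rot n (-k) * z, ⟨?_, ?_⟩, ?_⟩
    · rw [rot_mul_pow hn]; exact hz.1
    · rw [neg_zero, rot_zero, one_mul]; exact hz.2
    · show rot n k * (rot n (-k) * z) = z
      rw [← mul_assoc, hinv, one_mul]
  · rintro ⟨w, hw, rfl⟩
    constructor
    · rw [rot_mul_pow hn]; exact hw.1
    · rw [← mul_assoc, hinv', one_mul]
      have := hw.2
      rwa [neg_zero, rot_zero, one_mul] at this

private lemma card_components_eq {S : Set ℂ} {n : ℕ} {P : Fin n → Set ℂ}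
    (hopen : ∀ k, IsOpen (P k)) (hsub : ∀ k, P k ⊆ S)
    (hconn : ∀ k, IsPreconnected (P k)) (hne : ∀ k, (P k).Nonempty)
    (hcover : ∀ z ∈ S, ∃ k, z ∈ P k)
    (hdisj : ∀ k k' z, z ∈ P k → z ∈ P k' → k = k') :
    Nat.card (ConnectedComponents S) = n := by
  have hf : ∀ z : S, ∃ k, (z : ℂ) ∈ P k := fun z => hcover z z.2
  choose f hfmem using hf
  have hfc : Continuous f := by
    rw [continuous_iff_continuousAt]
    intro z
    apply Filter.EventuallyEq.continuousAt (y := f z)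
    have hU : Subtype.val ⁻¹' (P (f z)) ∈ 𝓝 z :=
      (((hopen (f z)).preimage continuous_subtype_val)).mem_nhds (hfmem z)
    filter_upwards [hU] with w hw
    exact hdisj _ _ _ (hfmem w) hw
  set g := hfc.connectedComponentsLift with hg
  have hginj : Function.Injective g := by
    intro x y
    obtain ⟨a, rfl⟩ := ConnectedComponents.surjective_coe x
    obtain ⟨b, rfl⟩ := ConnectedComponents.surjective_coe y
    intro hab
    have hab' : f a = f b := by
      have h1 : g ↑a = f a := hfc.connectedComponentsLift_apply_coe a
      have h2 : g ↑b = f b := hfc.connectedComponentsLift_apply_coe b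
      rw [← h1, ← h2, hab]
    rw [ConnectedComponents.coe_eq_coe]
    set k := f a with hk
    have himg : Subtype.val '' (Subtype.val ⁻¹' (P k) : Set S) = P k := by
      rw [Subtype.image_preimage_coe, Set.inter_eq_self_of_subset_right (hsub k)]
    have hT : IsPreconnected (Subtype.val ⁻¹' (P k) : Set S) := by
      rw [← Topology.IsInducing.subtypeVal.isPreconnected_image, himg]
      exact hconn k
    have ha : a ∈ (Subtype.val ⁻¹' (P k) : Set S) := hfmem a
    have hb : b ∈ (Subtype.val ⁻¹' (P k) : Set S) := by
      have := hfmem b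
      rwa [← hab'] at this
    have h1 := hT.subset_connectedComponent ha
    exact connectedComponent_eq (h1 hb)
  have hgsurj : Function.Surjective g := by
    intro k
    obtain ⟨z, hz⟩ := hne k
    refine ⟨(⟨z, hsub k hz⟩ : S), ?_⟩
    have h1 : g ↑(⟨z, hsub k hz⟩ : S) = f ⟨z, hsub k hz⟩ :=
      hfc.connectedComponentsLift_apply_coe _
    rw [h1]
    exact hdisj _ _ _ (hfmem _) hz
  rw [Nat.card_eq_of_bijective g ⟨hginj, hgsurj⟩, Nat.card_eq_fintype_card, Fintype.card_fin]

end Statement18Aux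


/-- For every `n ≥ 1`, the set `{z : |z^n - 1| < 1}` has exactly `n` connected
components. -/
theorem statement18 (n : ℕ) (hn : 1 ≤ n) :
    Nat.card (ConnectedComponents {z : ℂ | ‖z ^ n - 1‖ < 1}) = n := by
  apply card_components_eq (P := fun k : Fin n => petal n ((k : ℕ) : ℤ))
  · intro k; exact petal_isOpen hn _
  · intro k z hz; exact hz.1
  · intro k
    rw [petal_eq_image hn]
    exact (petal_zero_preconnected hn).image _ (continuous_mul_left _).continuousOn
  · intro k
    rw [petal_eq_image hn]
    exact (petal_zero_nonempty hn).image _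
  · intro z hz
    obtain ⟨k, hk0, hk1, hk⟩ := exists_petal hn hz
    refine ⟨⟨k.toNat, by omega⟩, ?_⟩
    have : ((k.toNat : ℕ) : ℤ) = k := Int.toNat_of_nonneg hk0
    simpa [this] using hk
  · intro k k' z h h'
    have h1 : (((k : ℕ) : ℤ)) = (((k' : ℕ) : ℤ)) :=
      petal_disjoint hn (by positivity) (by exact_mod_cast k.is_lt) (by positivity)
        (by exact_mod_cast k'.is_lt) h h'
    exact Fin.ext (by exact_mod_cast h1)
end
end
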